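/- arXiv:2604.03077 — 5 statements merged into one kernel-verified Lean document; each statement's English description precedes it below -/
import Mathlib

section
/- Let p be a polynomial of degree at most l on a d-simplex K, written in Bernstein form p = Σ_{|α|=l} c_α ∏_i λ_i^{α_i}/α_i!, and let F be a face of K with vertex index set I_F. Then the following are equivalent for q ≥ 0: (1) all derivatives of p of order ≤ q vanish on F; (2) c_α = 0 whenever Σ_{i ∉ I_F} α_i ≤ q. -/
open Finset

variable {E : Type*} [NormedAddCommGroup E] [NormedSpace ℝ E]

lemma vanish_mul {f g : E → ℝ} (hf : ContDiff ℝ (⊤ : ℕ∞) f) (hg : ContDiff ℝ (⊤ : ℕ∞) g)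
    {x : E} {a b : ℕ} (Hf : ∀ i, i < a → iteratedFDeriv ℝ i f x = 0)
    (Hg : ∀ j, j < b → iteratedFDeriv ℝ j g x = 0) :
    ∀ n, n < a + b → iteratedFDeriv ℝ n (fun y => f y * g y) x = 0 := by
  intro n hn
  have h := norm_iteratedFDeriv_mul_le (𝕜 := ℝ) hf hg x
    (n := n) (by exact_mod_cast le_top)
  have hzero : ∀ i ∈ Finset.range (n + 1),
      (n.choose i : ℝ) * ‖iteratedFDeriv ℝ i f x‖ * ‖iteratedFDeriv ℝ (n - i) g x‖ = 0 := by
    intro i hi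
    have hi' := Finset.mem_range.mp hi
    rcases lt_or_ge i a with h1 | h1
    · rw [Hf i h1]; simp
    · have : n - i < b := by omega
      rw [Hg _ this]; simp
  rw [Finset.sum_eq_zero hzero] at h
  exact norm_le_zero_iff.mp h

lemma vanish_zero {f : E → ℝ} {x : E} (h : f x = 0) : iteratedFDeriv ℝ 0 f x = 0 := by
  ext m
  simp [iteratedFDeriv_zero_apply, h]

lemma vanish_pow {f : E → ℝ} (hf : ContDiff ℝ (⊤ : ℕ∞) f) {x : E} (h : f x = 0) (k : ℕ) :
    ∀ n, n < k → iteratedFDeriv ℝ n (fun y => f y ^ k) x = 0 := by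
  induction k with
  | zero => intro n hn; omega
  | succ k ih =>
    have : (fun y => f y ^ (k + 1)) = fun y => f y * f y ^ k := by
      funext y; ring
    rw [this]
    intro n hn
    rcases Nat.eq_zero_or_pos k with hk | hk
    · subst hk
      have hn0 : n = 0 := by omega
      subst hn0
      exact vanish_zero (by simp [h])
    · refine vanish_mul (a := 1) (b := k) hf (hf.pow k) (fun i hi => ?_) ih n (by omega)
      have hi0 : i = 0 := by omega
      subst hi0
      exact vanish_zero h

lemma vanish_prod {ι : Type*} [DecidableEq ι] {g : ι → E → ℝ} {x : E} (k : ι → ℕ)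
    (s : Finset ι) (hg : ∀ i ∈ s, ContDiff ℝ (⊤ : ℕ∞) (g i))
    (H : ∀ i ∈ s, ∀ n, n < k i → iteratedFDeriv ℝ n (g i) x = 0) :
    ∀ n, n < ∑ i ∈ s, k i → iteratedFDeriv ℝ n (fun y => ∏ i ∈ s, g i y) x = 0 := by
  induction s using Finset.induction with
  | empty => intro n hn; simp at hn
  | insert a s hns ih =>
    intro n hn
    have he : (fun y => ∏ i ∈ insert a s, g i y) = fun y => g a y * ∏ i ∈ s, g i y := by
      funext y; rw [Finset.prod_insert hns]
    rw [he]
    have hprod : ContDiff ℝ (⊤ : ℕ∞) (fun y => ∏ i ∈ s, g i y) :=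
      by simpa using contDiff_prod (fun i hi => hg i (Finset.mem_insert_of_mem hi))
    refine vanish_mul (hg a (Finset.mem_insert_self a s)) hprod
      (H a (Finset.mem_insert_self a s))
      (ih (fun i hi => hg i (Finset.mem_insert_of_mem hi))
        (fun i hi => H i (Finset.mem_insert_of_mem hi))) n ?_
    rwa [Finset.sum_insert hns] at hn

lemma iteratedDeriv_line {f : E → ℝ} (hf : ContDiff ℝ (⊤ : ℕ∞) f) (x v : E) (n : ℕ) :
    ∀ t : ℝ, iteratedDeriv n (fun s : ℝ => f (x + s • v)) t
      = iteratedFDeriv ℝ n f (x + t • v) (fun _ => v) := by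
  induction n with
  | zero => intro t; simp
  | succ n ih =>
    intro t
    rw [iteratedDeriv_succ]
    have hIH : iteratedDeriv n (fun s : ℝ => f (x + s • v))
        = fun t => iteratedFDeriv ℝ n f (x + t • v) (fun _ => v) := funext ih
    rw [hIH]
    have hline : HasDerivAt (fun s : ℝ => x + s • v) v t := by
      simpa using ((hasDerivAt_id t).smul_const v).const_add x
    have hG : ContDiff ℝ 1 (iteratedFDeriv ℝ n f) :=
      hf.iteratedFDeriv_right (by exact_mod_cast le_top)
    have hd : HasFDerivAt (iteratedFDeriv ℝ n f)
        (fderiv ℝ (iteratedFDeriv ℝ n f) (x + t • v)) (x + t • v) :=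
      ((hG.differentiable one_ne_zero) (x + t • v)).hasFDerivAt
    have hcomp : HasDerivAt (fun s : ℝ => iteratedFDeriv ℝ n f (x + s • v))
        (fderiv ℝ (iteratedFDeriv ℝ n f) (x + t • v) v) t := hd.comp_hasDerivAt t hline
    have happ := ((ContinuousMultilinearMap.apply ℝ (fun _ : Fin n => E) ℝ
      (fun _ => v)).hasFDerivAt.comp_hasDerivAt t hcomp)
    have hderiv := happ.deriv
    rw [iteratedFDeriv_succ_apply_left]
    exact hderiv

lemma iteratedDeriv_polyeval : ∀ (n : ℕ) (Q : Polynomial ℝ) (t : ℝ),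
    iteratedDeriv n (fun s => Q.eval s) t = (Polynomial.derivative^[n] Q).eval t := by
  intro n
  induction n with
  | zero => intro Q t; simp
  | succ n ih =>
    intro Q t
    rw [iteratedDeriv_succ']
    have h : deriv (fun s => Q.eval s) = fun s => (Polynomial.derivative Q).eval s :=
      funext fun s => Polynomial.deriv (p := Q)
    rw [h, ih, Function.iterate_succ_apply]

lemma coeff_eq_zero_of_iteratedDeriv (Q : Polynomial ℝ) (n : ℕ)
    (h : iteratedDeriv n (fun s => Q.eval s) 0 = 0) : Q.coeff n = 0 := by
  rw [iteratedDeriv_polyeval, ← Polynomial.coeff_zero_eq_eval_zero,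
    Polynomial.coeff_iterate_derivative] at h
  simp only [zero_add, Nat.descFactorial_self, nsmul_eq_mul] at h
  have hne : (Nat.factorial n : ℝ) ≠ 0 := by exact_mod_cast n.factorial_ne_zero
  exact (mul_eq_zero.mp h).resolve_left hne

open Finset Polynomial

lemma algebra_step (d l q : ℕ) (IF : Finset (Fin (d + 1))) (hIF : IF.Nonempty)
    (c : (Fin (d + 1) → ℕ) → ℝ)
    (KEY : ∀ n ≤ q, ∀ w : Fin (d + 1) → ℝ, (∑ i, w i) = 1 → (∀ i ∉ IF, w i = 0) →
      ∀ u : Fin (d + 1) → ℝ, (∑ i, u i) = 0 →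
      (∑ α ∈ Finset.Nat.antidiagonalTuple (d + 1) l, Polynomial.C (c α) *
        ∏ i, ((Polynomial.C (w i) + Polynomial.C (u i) * Polynomial.X) ^ (α i)
          * Polynomial.C (((α i).factorial : ℝ)⁻¹))).coeff n = 0) :
    ∀ α ∈ Finset.Nat.antidiagonalTuple (d + 1) l, (∑ i ∈ IFᶜ, α i) ≤ q → c α = 0 := by
  classical
  set T := Finset.Nat.antidiagonalTuple (d + 1) l with hT
  suffices Hm : ∀ m, m ≤ q → ∀ α ∈ T, (∑ i ∈ IFᶜ, α i) = m → c α = 0 by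
    intro α hα hle
    exact Hm _ hle α hα rfl
  intro m
  induction m using Nat.strong_induction_on with
  | _ m IH =>
  intro hmq
  obtain ⟨i₀, hi₀⟩ := hIF
  -- Step A
  have stepA : ∀ w u : Fin (d + 1) → ℝ, (∑ i, w i) = 1 → (∀ i ∉ IF, w i = 0) →
      (∑ i, u i) = 0 →
      ∑ α ∈ T.filter (fun α => (∑ i ∈ IFᶜ, α i) = m),
        c α * ((∏ i ∈ IFᶜ, u i ^ α i) * (∏ i ∈ IF, w i ^ α i) *
          ∏ i, ((α i).factorial : ℝ)⁻¹) = 0 := by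
    intro w u hw1 hw0 hu
    have hkey := KEY m hmq w hw1 hw0 u hu
    rw [Polynomial.finset_sum_coeff] at hkey
    rw [← hkey]
    rw [Finset.sum_filter]
    apply Finset.sum_congr rfl
    intro α hαT
    -- rewrite the per-α polynomial
    have hsplit : (∏ i, ((Polynomial.C (w i) + Polynomial.C (u i) * Polynomial.X) ^ (α i)
          * Polynomial.C (((α i).factorial : ℝ)⁻¹)))
        = ((Polynomial.C ((∏ i ∈ IFᶜ, u i ^ α i) * ∏ i, ((α i).factorial : ℝ)⁻¹)) *
            ∏ i ∈ IF, (Polynomial.C (w i) + Polynomial.C (u i) * Polynomial.X) ^ (α i)) *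
          Polynomial.X ^ (∑ i ∈ IFᶜ, α i) := by
      rw [Finset.prod_mul_distrib]
      rw [← Finset.prod_mul_prod_compl IF
        (fun i => (Polynomial.C (w i) + Polynomial.C (u i) * Polynomial.X) ^ (α i))]
      have hcompl : ∏ i ∈ IFᶜ, (Polynomial.C (w i) + Polynomial.C (u i) * Polynomial.X) ^ (α i)
          = Polynomial.C (∏ i ∈ IFᶜ, u i ^ α i) * Polynomial.X ^ (∑ i ∈ IFᶜ, α i) := by
        rw [map_prod, ← Finset.prod_pow_eq_pow_sum, ← Finset.prod_mul_distrib]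
        apply Finset.prod_congr rfl
        intro i hi
        rw [hw0 i (Finset.mem_compl.mp hi), map_zero, zero_add, mul_pow, map_pow]
      rw [hcompl]
      simp only [map_mul, map_prod]
      ring
    rw [hsplit, Polynomial.coeff_C_mul, Polynomial.coeff_mul_X_pow']
    rcases lt_trichotomy (∑ i ∈ IFᶜ, α i) m with hlt | heq | hgt
    · have hc0 : c α = 0 := IH _ hlt (by omega) α hαT rfl
      simp [hc0, hlt.ne]
    · rw [if_pos heq, if_pos (by omega), heq, Nat.sub_self,
        Polynomial.coeff_zero_eq_eval_zero]
      simp only [Polynomial.eval_mul, Polynomial.eval_C, Polynomial.eval_prod,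
        Polynomial.eval_pow, Polynomial.eval_add, Polynomial.eval_X, mul_zero, add_zero]
      ring
    · rw [if_neg (by omega), if_neg (by omega), mul_zero]
  -- Step B
  have stepB : ∀ z : Fin (d + 1) → ℝ, (∑ i ∈ IF, z i) = 1 →
      ∑ α ∈ T.filter (fun α => (∑ i ∈ IFᶜ, α i) = m),
        c α * ((∏ i, z i ^ α i) * ∏ i, ((α i).factorial : ℝ)⁻¹) = 0 := by
    intro z hz
    set w : Fin (d + 1) → ℝ := fun i => if i ∈ IF then z i else 0 with hwdef
    set u : Fin (d + 1) → ℝ :=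
      fun i => (if i ∈ IF then 0 else z i) - (if i = i₀ then ∑ j ∈ IFᶜ, z j else 0) with hudef
    have hw1 : (∑ i, w i) = 1 := by
      rw [hwdef]
      rw [Finset.sum_ite_mem, Finset.univ_inter]
      exact hz
    have hw0 : ∀ i ∉ IF, w i = 0 := by
      intro i hi; simp [hwdef, hi]
    have hu : (∑ i, u i) = 0 := by
      rw [hudef, Finset.sum_sub_distrib]
      have h1 : ∑ i, (if i ∈ IF then (0:ℝ) else z i) = ∑ j ∈ IFᶜ, z j := by
        have : ∀ i, (if i ∈ IF then (0:ℝ) else z i) = (if i ∈ IFᶜ then z i else 0) := by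
          intro i; by_cases h : i ∈ IF <;> simp [h]
        rw [Finset.sum_congr rfl (fun i _ => this i), Finset.sum_ite_mem, Finset.univ_inter]
      have h2 : ∑ i, (if i = i₀ then (∑ j ∈ IFᶜ, z j) else (0:ℝ)) = ∑ j ∈ IFᶜ, z j := by
        simp
      rw [h1, h2, sub_self]
    have := stepA w u hw1 hw0 hu
    rw [← this]
    apply Finset.sum_congr rfl
    intro α hα
    have hαm : (∑ i ∈ IFᶜ, α i) = m := (Finset.mem_filter.mp hα).2
    congr 2
    rw [← Finset.prod_mul_prod_compl IF (fun i => z i ^ α i)]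
    rw [mul_comm]
    congr 1
    · apply Finset.prod_congr rfl
      intro i hi
      have hi' : i ∉ IF := Finset.mem_compl.mp hi
      have hne : i ≠ i₀ := fun h => hi' (h ▸ hi₀)
      have : u i = z i := by simp [hudef, hi', hne]
      rw [this]
    · apply Finset.prod_congr rfl
      intro i hi
      simp [hwdef, hi]
  -- Step C : scaling
  have stepC : ∀ z : Fin (d + 1) → ℝ, (∑ i ∈ IF, z i) ≠ 0 →
      ∑ α ∈ T.filter (fun α => (∑ i ∈ IFᶜ, α i) = m),
        c α * ((∏ i, z i ^ α i) * ∏ i, ((α i).factorial : ℝ)⁻¹) = 0 := by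
    intro z hσ
    set σ := ∑ i ∈ IF, z i with hσdef
    set z' : Fin (d + 1) → ℝ := fun i => if i ∈ IF then z i / σ else z i with hz'def
    have hz'1 : ∑ i ∈ IF, z' i = 1 := by
      rw [hz'def]
      rw [Finset.sum_congr rfl (fun i hi => if_pos hi), ← Finset.sum_div]
      exact div_self hσ
    have hB := stepB z' hz'1
    have hscale : ∀ α ∈ T.filter (fun α => (∑ i ∈ IFᶜ, α i) = m),
        c α * ((∏ i, z i ^ α i) * ∏ i, ((α i).factorial : ℝ)⁻¹)
          = σ ^ (l - m) * (c α * ((∏ i, z' i ^ α i) * ∏ i, ((α i).factorial : ℝ)⁻¹)) := by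
      intro α hα
      rw [Finset.mem_filter] at hα
      have hsum : ∑ i, α i = l := Finset.Nat.mem_antidiagonalTuple.mp hα.1
      have hsplitsum : (∑ i ∈ IF, α i) + (∑ i ∈ IFᶜ, α i) = l := by
        rw [Finset.sum_add_sum_compl]
        exact hsum
      have hIFdeg : ∑ i ∈ IF, α i = l - m := by omega
      have hzz : (∏ i, z i ^ α i) = σ ^ (l - m) * ∏ i, z' i ^ α i := by
        rw [← Finset.prod_mul_prod_compl IF (fun i => z i ^ α i),
          ← Finset.prod_mul_prod_compl IF (fun i => z' i ^ α i)]
        have h1 : ∏ i ∈ IFᶜ, z' i ^ α i = ∏ i ∈ IFᶜ, z i ^ α i := by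
          apply Finset.prod_congr rfl
          intro i hi
          rw [hz'def]
          simp [Finset.mem_compl.mp hi]
        have h2 : ∏ i ∈ IF, z i ^ α i = σ ^ (l - m) * ∏ i ∈ IF, z' i ^ α i := by
          have : ∀ i ∈ IF, z i ^ α i = z' i ^ α i * σ ^ α i := by
            intro i hi
            rw [hz'def]
            simp only [if_pos hi]
            rw [div_pow, div_mul_cancel₀]
            exact pow_ne_zero _ hσ
          rw [Finset.prod_congr rfl this, Finset.prod_mul_distrib,
            Finset.prod_pow_eq_pow_sum, hIFdeg]
          ring
        rw [h1, h2]
        ring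
      rw [hzz]
      ring
    rw [Finset.sum_congr rfl hscale, ← Finset.mul_sum, hB, mul_zero]
  -- Step D : MvPolynomial extraction
  intro α₀ hα₀T hα₀m
  set Tm := T.filter (fun α => (∑ i ∈ IFᶜ, α i) = m) with hTm
  set GP : MvPolynomial (Fin (d + 1)) ℝ :=
    ∑ α ∈ Tm, MvPolynomial.C (c α * ∏ i, ((α i).factorial : ℝ)⁻¹) *
      ∏ i, (MvPolynomial.X i) ^ α i with hGP
  set SP : MvPolynomial (Fin (d + 1)) ℝ := ∑ i ∈ IF, MvPolynomial.X i with hSP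
  have hevalG : ∀ z : Fin (d + 1) → ℝ, MvPolynomial.eval z GP
      = ∑ α ∈ Tm, c α * ((∏ i, z i ^ α i) * ∏ i, ((α i).factorial : ℝ)⁻¹) := by
    intro z
    rw [hGP, map_sum]
    apply Finset.sum_congr rfl
    intro α _
    simp only [map_mul, MvPolynomial.eval_C, map_prod, map_pow, MvPolynomial.eval_X]
    ring
  have hevalS : ∀ z : Fin (d + 1) → ℝ, MvPolynomial.eval z SP = ∑ i ∈ IF, z i := by
    intro z
    rw [hSP, map_sum]
    simp [MvPolynomial.eval_X]
  have hzero : GP * SP = 0 := by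
    apply MvPolynomial.funext
    intro z
    rw [map_mul, map_zero, hevalG, hevalS]
    by_cases hσ : (∑ i ∈ IF, z i) = 0
    · rw [hσ, mul_zero]
    · rw [stepC z hσ, zero_mul]
  have hSPne : SP ≠ 0 := by
    intro h
    have h1 := hevalS (fun _ => 1)
    rw [h, map_zero] at h1
    simp only [Finset.sum_const, nsmul_eq_mul, mul_one] at h1
    have hc : (IF.card : ℝ) ≠ 0 :=
      Nat.cast_ne_zero.mpr (Finset.card_ne_zero.mpr ⟨i₀, hi₀⟩)
    exact hc h1.symm
  have hGP0 : GP = 0 := by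
    rcases mul_eq_zero.mp hzero with h | h
    · exact h
    · exact absurd h hSPne
  -- extract coefficient at α₀
  have hmono : ∀ α : Fin (d + 1) → ℕ, (∏ i, (MvPolynomial.X i : MvPolynomial (Fin (d + 1)) ℝ) ^ α i)
      = MvPolynomial.monomial (Finsupp.equivFunOnFinite.symm α) 1 := by
    intro α
    rw [← MvPolynomial.prod_X_pow_eq_monomial]
    symm
    apply Finset.prod_subset (Finset.subset_univ _)
    intro i _ hi
    have h0 : (Finsupp.equivFunOnFinite.symm α) i = 0 := Finsupp.notMem_support_iff.mp hi
    rw [h0, pow_zero]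
  have hcoeff := congrArg (MvPolynomial.coeff (Finsupp.equivFunOnFinite.symm α₀)) hGP0
  rw [hGP, MvPolynomial.coeff_zero] at hcoeff
  rw [MvPolynomial.coeff_sum] at hcoeff
  have hα₀Tm : α₀ ∈ Tm := Finset.mem_filter.mpr ⟨hα₀T, hα₀m⟩
  rw [Finset.sum_eq_single α₀ (fun α hα hne => ?_) (fun h => absurd hα₀Tm h)] at hcoeff
  · rw [hmono, MvPolynomial.C_mul_monomial, mul_one, MvPolynomial.coeff_monomial,
      if_pos rfl] at hcoeff
    have hfac : (∏ i, ((α₀ i).factorial : ℝ)⁻¹) ≠ 0 := by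
      apply Finset.prod_ne_zero_iff.mpr
      intro i _
      exact inv_ne_zero (by exact_mod_cast (α₀ i).factorial_ne_zero)
    exact (mul_eq_zero.mp hcoeff).resolve_right hfac
  · rw [hmono, MvPolynomial.C_mul_monomial, mul_one, MvPolynomial.coeff_monomial,
      if_neg (fun h => hne (Finsupp.equivFunOnFinite.symm.injective h))]

/-- For a polynomial `p = ∑_{|α|=l} c_α ∏_i λ_i^{α_i}/α_i!` in Bernstein form on a `d`-simplex
and a face `F` with vertex index set `I_F`, the following are equivalent for `q ≥ 0`:
(1) all derivatives of `p` of order `≤ q` vanish on `F`;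
(2) `c_α = 0` whenever `∑_{i ∉ I_F} α_i ≤ q`. -/
theorem stmt7 (d l q : ℕ)
    (b : AffineBasis (Fin (d + 1)) ℝ (EuclideanSpace ℝ (Fin d)))
    (IF : Finset (Fin (d + 1))) (hIF : IF.Nonempty)
    (c : (Fin (d + 1) → ℕ) → ℝ) (p : EuclideanSpace ℝ (Fin d) → ℝ)
    (hp : ∀ x, p x = ∑ α ∈ Finset.Nat.antidiagonalTuple (d + 1) l,
      c α * ∏ i, (b.coord i x) ^ (α i) / ((α i).factorial : ℝ)) :
    (∀ n, n ≤ q → ∀ x : EuclideanSpace ℝ (Fin d),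
        (∀ i ∉ IF, b.coord i x = 0) → iteratedFDeriv ℝ n p x = 0) ↔
      (∀ α ∈ Finset.Nat.antidiagonalTuple (d + 1) l,
        (∑ i ∈ IFᶜ, α i) ≤ q → c α = 0) := by
  classical
  have hcoord : ∀ i, ContDiff ℝ (⊤ : ℕ∞) (fun y : EuclideanSpace ℝ (Fin d) => b.coord i y) := by
    intro i
    have hd : (fun y : EuclideanSpace ℝ (Fin d) => b.coord i y)
        = fun y => (b.coord i).linear y + (b.coord i) 0 := by
      funext y
      exact congrFun (AffineMap.decomp (b.coord i)) y
    rw [hd]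
    exact (LinearMap.toContinuousLinearMap ((b.coord i).linear)).contDiff.add contDiff_const
  have hterm : ∀ α : Fin (d + 1) → ℕ, ContDiff ℝ (⊤ : ℕ∞)
      (fun y : EuclideanSpace ℝ (Fin d) =>
        c α * ∏ i, (b.coord i y) ^ (α i) / ((α i).factorial : ℝ)) := by
    intro α
    exact contDiff_const.mul (contDiff_prod (fun i _ => ((hcoord i).pow _).div_const _))
  have hps : p = fun y => ∑ α ∈ Finset.Nat.antidiagonalTuple (d + 1) l,
      c α * ∏ i, (b.coord i y) ^ (α i) / ((α i).factorial : ℝ) := funext hp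
  have hpsm : ContDiff ℝ (⊤ : ℕ∞) p := by
    rw [hps]
    exact ContDiff.sum (fun α _ => hterm α)
  constructor
  · intro H
    apply algebra_step d l q IF hIF c
    intro n hn w hw1 hw0 u hu
    obtain ⟨i₀, hi₀⟩ := hIF
    set x := Finset.univ.affineCombination ℝ (⇑b) w with hxdef
    have hxcoord : ∀ i, b.coord i x = w i := fun i =>
      b.coord_apply_combination_of_mem (Finset.mem_univ i) hw1
    set v := ∑ j, u j • ((b j : EuclideanSpace ℝ (Fin d)) - b i₀) with hvdef
    have hvcoord : ∀ k, (b.coord k).linear v = u k := by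
      intro k
      rw [hvdef, map_sum]
      have hterm2 : ∀ j, (b.coord k).linear (u j • ((b j : EuclideanSpace ℝ (Fin d)) - b i₀))
          = u j * ((if k = j then (1:ℝ) else 0) - if k = i₀ then 1 else 0) := by
        intro j
        rw [map_smul]
        have h1 : ((b j : EuclideanSpace ℝ (Fin d)) - b i₀)
            = (b j : EuclideanSpace ℝ (Fin d)) -ᵥ (b i₀ : EuclideanSpace ℝ (Fin d)) := rfl
        rw [h1, AffineMap.linearMap_vsub]
        rw [AffineBasis.coord_apply, AffineBasis.coord_apply]
        rfl
      rw [Finset.sum_congr rfl (fun j _ => hterm2 j)]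
      simp only [mul_sub]
      rw [Finset.sum_sub_distrib]
      have e1 : ∑ j, u j * (if k = j then (1:ℝ) else 0) = u k := by simp
      have e2 : ∑ j, u j * (if k = i₀ then (1:ℝ) else 0)
          = (∑ j, u j) * (if k = i₀ then 1 else 0) := by rw [← Finset.sum_mul]
      rw [e1, e2, hu, zero_mul, sub_zero]
    have hlinecoord : ∀ i, ∀ t : ℝ, b.coord i (x + t • v) = w i + t * u i := by
      intro i t
      have hvadd : x + t • v = (t • v) +ᵥ x := by rw [add_comm]; rfl
      rw [hvadd, AffineMap.map_vadd, map_smul, hvcoord, hxcoord]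
      simp [smul_eq_mul]
      ring
    set Q : Polynomial ℝ := ∑ α ∈ Finset.Nat.antidiagonalTuple (d + 1) l,
        Polynomial.C (c α) *
        ∏ i, ((Polynomial.C (w i) + Polynomial.C (u i) * Polynomial.X) ^ (α i)
          * Polynomial.C (((α i).factorial : ℝ)⁻¹)) with hQdef
    have hev : ∀ t : ℝ, Q.eval t = p (x + t • v) := by
      intro t
      rw [hp, hQdef, Polynomial.eval_finset_sum]
      apply Finset.sum_congr rfl
      intro α _
      rw [Polynomial.eval_mul, Polynomial.eval_C, Polynomial.eval_prod]
      congr 1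
      apply Finset.prod_congr rfl
      intro i _
      rw [Polynomial.eval_mul, Polynomial.eval_pow, Polynomial.eval_add, Polynomial.eval_C,
        Polynomial.eval_mul, Polynomial.eval_C, Polynomial.eval_X, Polynomial.eval_C,
        hlinecoord]
      rw [div_eq_mul_inv]
      ring
    have hface : ∀ i ∉ IF, b.coord i x = 0 := fun i hi => by
      rw [hxcoord]; exact hw0 i hi
    have hD : iteratedFDeriv ℝ n p x = 0 := H n hn x hface
    apply coeff_eq_zero_of_iteratedDeriv
    have hfun : (fun s : ℝ => Q.eval s) = fun s => p (x + s • v) := funext hev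
    rw [hfun, iteratedDeriv_line hpsm x v n]
    have hx0 : x + (0:ℝ) • v = x := by simp
    rw [hx0, hD]
    simp
  · intro H n hn x hx
    rw [hps]
    have hsum := iteratedFDeriv_sum (𝕜 := ℝ) (u := Finset.Nat.antidiagonalTuple (d + 1) l)
      (i := n)
      (f := fun α (y : EuclideanSpace ℝ (Fin d)) =>
        c α * ∏ i, (b.coord i y) ^ (α i) / ((α i).factorial : ℝ))
      (fun α _ => (hterm α).of_le (by exact_mod_cast le_top))
    have h2 := congrFun hsum x
    rw [Finset.sum_apply] at h2
    refine h2.trans (Finset.sum_eq_zero ?_)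
    intro α hαT
    show iteratedFDeriv ℝ n (fun y : EuclideanSpace ℝ (Fin d) =>
      c α * ∏ i, (b.coord i y) ^ (α i) / ((α i).factorial : ℝ)) x = 0
    rcases le_or_gt (∑ i ∈ IFᶜ, α i) q with hle | hgt
    · have hc0 : c α = 0 := H α hαT hle
      have h0 : (fun y : EuclideanSpace ℝ (Fin d) =>
          c α * ∏ i, (b.coord i y) ^ (α i) / ((α i).factorial : ℝ)) = fun _ => (0:ℝ) := by
        funext y; rw [hc0, zero_mul]
      rw [h0, iteratedFDeriv_zero_fun]
      rfl
    · refine vanish_mul (a := 0) (b := ∑ i ∈ IFᶜ, α i) contDiff_const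
        (contDiff_prod (fun i _ => ((hcoord i).pow _).div_const _))
        (fun i hi => absurd hi (Nat.not_lt_zero i)) ?_ n (by omega)
      intro j hj
      have hksum : ∑ i, (if i ∈ IF then 0 else α i) = ∑ i ∈ IFᶜ, α i := by
        have hcongr : ∀ i, (if i ∈ IF then 0 else α i) = (if i ∈ IFᶜ then α i else 0) := by
          intro i; by_cases h : i ∈ IF <;> simp [h]
        rw [Finset.sum_congr rfl (fun i _ => hcongr i), Finset.sum_ite_mem, Finset.univ_inter]
      refine vanish_prod (k := fun i => if i ∈ IF then 0 else α i) Finset.univ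
        (fun i _ => ((hcoord i).pow _).div_const _) ?_ j (by rw [hksum]; exact hj)
      intro i _ n' hn'
      by_cases hiIF : i ∈ IF
      · simp [hiIF] at hn'
      · simp only [if_neg hiIF] at hn'
        have hdiv : (fun y : EuclideanSpace ℝ (Fin d) =>
            (b.coord i y) ^ (α i) / ((α i).factorial : ℝ))
            = fun y => (b.coord i y) ^ (α i) * ((((α i).factorial : ℝ))⁻¹) := by
          funext y; rw [div_eq_mul_inv]
        rw [hdiv]
        exact vanish_mul (a := α i) (b := 0) ((hcoord i).pow (α i)) contDiff_const
          (vanish_pow (hcoord i) (hx i hiIF) (α i))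
          (fun j hj => absurd hj (Nat.not_lt_zero j)) n' (by omega)
end

section
/- Let p ∈ P_ρ(K) and let Q_k^ρ be the Alfeld-split lifting operator with b = k − ρ ≥ 1. Then for each j ∈ {0, ..., d} and each 0 ≤ n ≤ ρ, the n-th derivative of Q_k^ρ(p)|_{K_j} at the split point V_A equals ((ρ−n)!/(k−n)!) times the n-th derivative of p at V_A. In particular, ∇^n Q_k^ρ(p) is single-valued at V_A for 0 ≤ n ≤ ρ. -/
open Finset

/-- Translation invariance of iterated derivatives (for smooth functions). -/
theorem aux_iteratedFDeriv_comp_sub {E F : Type*} [NormedAddCommGroup E] [NormedSpace ℝ E]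
    [NormedAddCommGroup F] [NormedSpace ℝ F]
    {f : E → F} (hf : ContDiff ℝ ⊤ f) (c : E) (n : ℕ) (x : E) :
    iteratedFDeriv ℝ n (fun y => f (y - c)) x = iteratedFDeriv ℝ n f (x - c) := by
  induction n generalizing x with
  | zero => ext m; simp
  | succ n ih =>
    have h1 : (iteratedFDeriv ℝ n (fun y => f (y - c)))
        = fun y => iteratedFDeriv ℝ n f (y - c) := funext ih
    rw [iteratedFDeriv_succ_eq_comp_left, iteratedFDeriv_succ_eq_comp_left, h1]
    have hd : DifferentiableAt ℝ (iteratedFDeriv ℝ n f) (x - c) := by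
      refine (hf.differentiable_iteratedFDeriv ?_).differentiableAt
      exact_mod_cast WithTop.coe_lt_top (n : ℕ∞)
    have h2 : HasFDerivAt (fun y : E => y - c) (ContinuousLinearMap.id ℝ E) x := by
      simpa using (hasFDerivAt_id x).sub_const c
    have h3 := (hd.hasFDerivAt.comp x h2).fderiv
    simp only [Function.comp_apply]
    rw [Function.comp_def] at h3
    exact congrArg _ (by rw [h3, ContinuousLinearMap.comp_id])

/-- The `n`-th derivative at `0` of the diagonal restriction of a `q`-multilinear map
vanishes when `n ≠ q`. -/
theorem aux_multilinear_diag_zero {ι : Type*} [Fintype ι] {E : Type*} [NormedAddCommGroup E]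
    [NormedSpace ℝ E] (M : ContinuousMultilinearMap ℝ (fun _ : ι => E) ℝ) (n : ℕ)
    (hn : n ≠ Fintype.card ι) :
    iteratedFDeriv ℝ n (fun v => M (fun _ => v)) 0 = 0 := by
  classical
  have hcomp : (fun v => M (fun _ => v))
      = ⇑M ∘ ⇑(ContinuousLinearMap.pi fun _ : ι => ContinuousLinearMap.id ℝ E) := rfl
  have hM0 : iteratedFDeriv ℝ n (⇑M) 0 = 0 := by
    rw [M.iteratedFDeriv_eq]
    unfold ContinuousMultilinearMap.iteratedFDeriv
    apply Finset.sum_eq_zero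
    intro e _
    rcases lt_or_gt_of_ne hn with h | h
    · have hne : ∃ a : ι, a ∉ Set.range ⇑e := by
        by_contra h'
        push_neg at h'
        have hs : Function.Surjective ⇑e := fun a => h' a
        have := Fintype.card_le_of_surjective _ hs
        simp only [Fintype.card_fin] at this
        omega
      obtain ⟨a, ha⟩ := hne
      haveI : Nonempty {x : ι // x ∉ Set.range ⇑e} := ⟨⟨a, ha⟩⟩
      have h0 : (Pi.compRightL ℝ (fun _ : ι => E) Subtype.val) (0 : ι → E)
          = (0 : {x : ι // x ∉ Set.range ⇑e} → E) := map_zero _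
      rw [h0]
      exact (M.iteratedFDerivComponent e.toEquivRange).map_zero
    · exact absurd (Fintype.card_le_of_embedding e) (by simp; omega)
  rw [hcomp, ContinuousLinearMap.iteratedFDeriv_comp_right _ M.contDiff _ le_top, map_zero, hM0]
  ext v
  simp

/-- The `n`-th derivative at `x₀` of a product of `q` linear forms in `x - x₀`
vanishes when `n ≠ q`. -/
theorem aux_prod_linear_zero {E : Type*} [NormedAddCommGroup E] [NormedSpace ℝ E]
    {ι : Type*} [Fintype ι] (L : ι → E →L[ℝ] ℝ) (x₀ : E) (n : ℕ)
    (hn : n ≠ Fintype.card ι) :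
    iteratedFDeriv ℝ n (fun x => ∏ t, L t (x - x₀)) x₀ = 0 := by
  classical
  set M : ContinuousMultilinearMap ℝ (fun _ : ι => E) ℝ :=
    (ContinuousMultilinearMap.mkPiAlgebra ℝ ι ℝ).compContinuousLinearMap L with hM
  have hg : ∀ v, M (fun _ => v) = ∏ t, L t v := by intro v; simp [hM]
  have h1 : (fun x => ∏ t, L t (x - x₀)) = fun x => (fun v => M (fun _ => v)) (x - x₀) := by
    funext x; exact (hg (x - x₀)).symm
  have hcd : ContDiff ℝ ⊤ (fun v => M (fun _ => v)) := by
    have : ContDiff ℝ ⊤ (⇑M ∘ ⇑(ContinuousLinearMap.pi fun _ : ι => ContinuousLinearMap.id ℝ E)) :=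
      M.contDiff.comp (ContinuousLinearMap.pi fun _ : ι => ContinuousLinearMap.id ℝ E).contDiff
    exact this
  rw [h1, aux_iteratedFDeriv_comp_sub hcd, sub_self, aux_multilinear_diag_zero M n hn]

theorem aux_U_zero {E : Type*} [NormedAddCommGroup E] [NormedSpace ℝ E] [FiniteDimensional ℝ E]
    (VA : E) (d : ℕ) (j : Fin (d+1))
    (ℓ : Fin (d+1) → (E →ᵃ[ℝ] ℝ))
    (hℓVA : ∀ i, ℓ i VA = if i = j then 1 else 0)
    (β : Fin (d+1) → ℕ) (r n : ℕ)
    (hn : n ≠ r + ∑ i ∈ Finset.univ.erase j, β i) :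
    iteratedFDeriv ℝ n
      (fun x => (ℓ j x - 1)^r * ∏ i ∈ Finset.univ.erase j, (ℓ i x)^(β i)) VA = 0 := by
  classical
  set L : Fin (d+1) → E →L[ℝ] ℝ := fun i => LinearMap.toContinuousLinearMap (ℓ i).linear with hLdef
  have hkey : ∀ i x, ℓ i x = L i (x - VA) + ℓ i VA := by
    intro i x
    have h := (ℓ i).map_vadd VA (x - VA)
    simp only [vsub_vadd, vadd_eq_add] at h
    simp only [sub_add_cancel] at h
    exact h
  have hLj : ∀ x, L j (x - VA) = ℓ j x - 1 := by
    intro x; rw [hkey j x, hℓVA j]; simp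
  have hLi : ∀ i, i ≠ j → ∀ x, L i (x - VA) = ℓ i x := by
    intro i hi x; rw [hkey i x, hℓVA i, if_neg hi]; simp
  set γ : Fin (d+1) → ℕ := fun i => if i = j then r else β i with hγ
  set Lf : ((i : Fin (d+1)) × Fin (γ i)) → E →L[ℝ] ℝ := fun p => L p.1 with hLf
  have hcard : Fintype.card ((i : Fin (d+1)) × Fin (γ i))
      = r + ∑ i ∈ Finset.univ.erase j, β i := by
    rw [Fintype.card_sigma]
    simp only [Fintype.card_fin]
    rw [← Finset.add_sum_erase Finset.univ γ (Finset.mem_univ j)]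
    congr 1
    · rw [hγ]; simp
    · apply Finset.sum_congr rfl
      intro i hi
      rw [hγ]; simp [Finset.ne_of_mem_erase hi]
  have hfun : (fun x => (ℓ j x - 1)^r * ∏ i ∈ Finset.univ.erase j, (ℓ i x)^(β i))
      = fun x => ∏ t : ((i : Fin (d+1)) × Fin (γ i)), Lf t (x - VA) := by
    funext x
    rw [← Finset.univ_sigma_univ, Finset.prod_sigma]
    simp only [hLf, Finset.prod_const, Finset.card_univ, Fintype.card_fin]
    rw [← Finset.mul_prod_erase Finset.univ (fun i => (L i (x - VA))^(γ i)) (Finset.mem_univ j)]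
    congr 1
    · rw [hLj x, hγ]; simp
    · apply Finset.prod_congr rfl
      intro i hi
      rw [hLi i (Finset.ne_of_mem_erase hi) x, hγ]
      simp [Finset.ne_of_mem_erase hi]
  rw [hfun]
  exact aux_prod_linear_zero Lf VA n (by rw [hcard]; exact hn)

theorem aux_cd {E : Type*} [NormedAddCommGroup E] [NormedSpace ℝ E] [FiniteDimensional ℝ E]
    {N : WithTop ℕ∞} (a : E →ᵃ[ℝ] ℝ) : ContDiff ℝ N ⇑a := by
  rw [a.decomp]
  exact (LinearMap.toContinuousLinearMap a.linear).contDiff.add contDiff_const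

theorem aux_G {E : Type*} [NormedAddCommGroup E] [NormedSpace ℝ E] [FiniteDimensional ℝ E]
    (VA : E) (d : ℕ) (j : Fin (d+1))
    (ℓ : Fin (d+1) → (E →ᵃ[ℝ] ℝ))
    (hℓVA : ∀ i, ℓ i VA = if i = j then 1 else 0)
    (β : Fin (d+1) → ℕ) (A n : ℕ)
    (hm : ∑ i ∈ Finset.univ.erase j, β i ≤ n) :
    iteratedFDeriv ℝ n (fun x => (ℓ j x)^A * ∏ i ∈ Finset.univ.erase j, (ℓ i x)^(β i)) VA
      = ((A.choose (n - ∑ i ∈ Finset.univ.erase j, β i)) : ℝ) •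
        iteratedFDeriv ℝ n (fun x => (ℓ j x - 1)^(n - ∑ i ∈ Finset.univ.erase j, β i) *
          ∏ i ∈ Finset.univ.erase j, (ℓ i x)^(β i)) VA := by
  classical
  have hcdP : ContDiff ℝ (n:ℕ) (fun x => ∏ i ∈ Finset.univ.erase j, (ℓ i x)^(β i)) :=
    contDiff_prod (fun i _ => ((aux_cd (ℓ i)).pow (β i)))
  have hcdU : ∀ r : ℕ, ContDiff ℝ (n:ℕ)
      (fun x => (ℓ j x - 1)^r * ∏ i ∈ Finset.univ.erase j, (ℓ i x)^(β i)) :=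
    fun r => (((aux_cd (ℓ j)).sub contDiff_const).pow r).mul hcdP
  have hexp : (fun x => (ℓ j x)^A * ∏ i ∈ Finset.univ.erase j, (ℓ i x)^(β i))
      = (fun x => ∑ r ∈ Finset.range (A+1), ((A.choose r : ℝ) *
          ((ℓ j x - 1)^r * ∏ i ∈ Finset.univ.erase j, (ℓ i x)^(β i)))) := by
    funext x
    rw [show (ℓ j x)^A = ((ℓ j x - 1) + 1)^A by rw [sub_add_cancel], add_pow, Finset.sum_mul]
    apply Finset.sum_congr rfl
    intro r _
    ring
  rw [hexp]
  have key := congrFun (iteratedFDeriv_sum (𝕜 := ℝ) (i := n) (u := Finset.range (A+1))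
      (f := fun r x => (A.choose r : ℝ) *
        ((ℓ j x - 1)^r * ∏ i ∈ Finset.univ.erase j, (ℓ i x)^(β i)))
      (fun r _ => contDiff_const.mul (hcdU r))) VA
  simp only [Finset.sum_apply] at key
  rw [key]
  have hsmul : ∀ r : ℕ, iteratedFDeriv ℝ n (fun x => (A.choose r : ℝ) *
        ((ℓ j x - 1)^r * ∏ i ∈ Finset.univ.erase j, (ℓ i x)^(β i))) VA
      = (A.choose r : ℝ) • iteratedFDeriv ℝ n
        (fun x => (ℓ j x - 1)^r * ∏ i ∈ Finset.univ.erase j, (ℓ i x)^(β i)) VA := by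
    intro r
    have h := iteratedFDeriv_const_smul_apply' (𝕜 := ℝ) (a := (A.choose r : ℝ)) (hcdU r).contDiffAt (x := VA)
    simpa [smul_eq_mul] using h
  rcases le_or_gt (n - ∑ i ∈ Finset.univ.erase j, β i) A with hA | hA
  · rw [Finset.sum_eq_single_of_mem (n - ∑ i ∈ Finset.univ.erase j, β i)
      (Finset.mem_range.mpr (by omega))]
    · rw [hsmul]
    · intro r _ hne
      rw [hsmul, aux_U_zero VA d j ℓ hℓVA β r n (by omega), smul_zero]
  · rw [Nat.choose_eq_zero_of_lt hA, Nat.cast_zero, zero_smul]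
    apply Finset.sum_eq_zero
    intro r hr
    rw [hsmul, aux_U_zero VA d j ℓ hℓVA β r n (by simp only [Finset.mem_range] at hr; omega),
      smul_zero]

theorem aux_G_zero {E : Type*} [NormedAddCommGroup E] [NormedSpace ℝ E] [FiniteDimensional ℝ E]
    (VA : E) (d : ℕ) (j : Fin (d+1))
    (ℓ : Fin (d+1) → (E →ᵃ[ℝ] ℝ))
    (hℓVA : ∀ i, ℓ i VA = if i = j then 1 else 0)
    (β : Fin (d+1) → ℕ) (A n : ℕ)
    (hm : n < ∑ i ∈ Finset.univ.erase j, β i) :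
    iteratedFDeriv ℝ n (fun x => (ℓ j x)^A * ∏ i ∈ Finset.univ.erase j, (ℓ i x)^(β i)) VA
      = 0 := by
  classical
  have hcdP : ContDiff ℝ (n:ℕ) (fun x => ∏ i ∈ Finset.univ.erase j, (ℓ i x)^(β i)) :=
    contDiff_prod (fun i _ => ((aux_cd (ℓ i)).pow (β i)))
  have hcdU : ∀ r : ℕ, ContDiff ℝ (n:ℕ)
      (fun x => (ℓ j x - 1)^r * ∏ i ∈ Finset.univ.erase j, (ℓ i x)^(β i)) :=
    fun r => (((aux_cd (ℓ j)).sub contDiff_const).pow r).mul hcdP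
  have hexp : (fun x => (ℓ j x)^A * ∏ i ∈ Finset.univ.erase j, (ℓ i x)^(β i))
      = (fun x => ∑ r ∈ Finset.range (A+1), ((A.choose r : ℝ) *
          ((ℓ j x - 1)^r * ∏ i ∈ Finset.univ.erase j, (ℓ i x)^(β i)))) := by
    funext x
    rw [show (ℓ j x)^A = ((ℓ j x - 1) + 1)^A by rw [sub_add_cancel], add_pow, Finset.sum_mul]
    apply Finset.sum_congr rfl
    intro r _
    ring
  rw [hexp]
  have key := congrFun (iteratedFDeriv_sum (𝕜 := ℝ) (i := n) (u := Finset.range (A+1))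
      (f := fun r x => (A.choose r : ℝ) *
        ((ℓ j x - 1)^r * ∏ i ∈ Finset.univ.erase j, (ℓ i x)^(β i)))
      (fun r _ => contDiff_const.mul (hcdU r))) VA
  simp only [Finset.sum_apply] at key
  rw [key]
  apply Finset.sum_eq_zero
  intro r _
  have h := iteratedFDeriv_const_smul_apply' (𝕜 := ℝ) (a := (A.choose r : ℝ)) (hcdU r).contDiffAt (x := VA)
  simp only [smul_eq_mul] at h
  rw [h, aux_U_zero VA d j ℓ hℓVA β r n (by omega), smul_zero]

/-- For `p ∈ P_ρ(K)` and the Alfeld-split lifting operator `Q_k^ρ` with `b = k - ρ ≥ 1`: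
for each `j` and each `0 ≤ n ≤ ρ`, the `n`-th derivative of `Q_k^ρ(p)|_{K_j}` at the split
point `V_A` equals `((ρ-n)!/(k-n)!)` times the `n`-th derivative of `p` at `V_A`; in
particular `∇ⁿ Q_k^ρ(p)` is single-valued at `V_A` for `0 ≤ n ≤ ρ`. -/
theorem stmt9 (d ρ k bnum : ℕ) (hk : k = ρ + bnum) (hbnum : 1 ≤ bnum)
    (b : AffineBasis (Fin (d + 1)) ℝ (EuclideanSpace ℝ (Fin d)))
    (μ : Fin (d + 1) → ℝ) (hμ : ∀ i, 0 < μ i) (hsum : ∑ i, μ i = 1)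
    (VA : EuclideanSpace ℝ (Fin d))
    (hVA : VA = Finset.univ.affineCombination ℝ
      (b : Fin (d + 1) → EuclideanSpace ℝ (Fin d)) μ)
    (bj : Fin (d + 1) → AffineBasis (Fin (d + 1)) ℝ (EuclideanSpace ℝ (Fin d)))
    (hbj : ∀ j i, bj j i = if i = j then VA else b i)
    (p : EuclideanSpace ℝ (Fin d) → ℝ)
    (c : Fin (d + 1) → (Fin (d + 1) → ℕ) → ℝ)
    (hp : ∀ j x, p x = ∑ β ∈ Finset.Nat.antidiagonalTuple (d + 1) ρ,
      c j β * ∏ i, ((bj j).coord i x) ^ (β i) / ((β i).factorial : ℝ))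
    (Qp : Fin (d + 1) → EuclideanSpace ℝ (Fin d) → ℝ)
    (hQp : ∀ j x, Qp j x = ∑ β ∈ Finset.Nat.antidiagonalTuple (d + 1) ρ,
      c j β * (((bj j).coord j x) ^ (β j + bnum) / ((β j + bnum).factorial : ℝ) *
        ∏ i ∈ Finset.univ.erase j, ((bj j).coord i x) ^ (β i) / ((β i).factorial : ℝ))) :
    (∀ j, ∀ n, n ≤ ρ →
      iteratedFDeriv ℝ n (Qp j) VA =
        (((ρ - n).factorial : ℝ) / ((k - n).factorial : ℝ)) • iteratedFDeriv ℝ n p VA) ∧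
    (∀ j j', ∀ n, n ≤ ρ →
      iteratedFDeriv ℝ n (Qp j) VA = iteratedFDeriv ℝ n (Qp j') VA) := by
  classical
  have main : ∀ j, ∀ n, n ≤ ρ →
      iteratedFDeriv ℝ n (Qp j) VA =
        (((ρ - n).factorial : ℝ) / ((k - n).factorial : ℝ)) • iteratedFDeriv ℝ n p VA := by
    intro j n hn
    set ℓ : Fin (d+1) → (EuclideanSpace ℝ (Fin d) →ᵃ[ℝ] ℝ) := fun i => (bj j).coord i with hℓ
    have hℓVA : ∀ i, ℓ i VA = if i = j then 1 else 0 := by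
      intro i
      have h1 : (bj j) j = VA := by rw [hbj j j]; simp
      calc (bj j).coord i VA = (bj j).coord i ((bj j) j) := by rw [h1]
      _ = if i = j then 1 else 0 := (bj j).coord_apply i j
    have hcdG : ∀ (β : Fin (d+1) → ℕ) (A : ℕ), ContDiff ℝ (n:ℕ)
        (fun x => (ℓ j x)^A * ∏ i ∈ Finset.univ.erase j, (ℓ i x)^(β i)) :=
      fun β A => ((aux_cd (ℓ j)).pow A).mul (contDiff_prod (fun i _ => (aux_cd (ℓ i)).pow (β i)))
    have hsm : ∀ (a : ℝ) (β : Fin (d+1) → ℕ) (A : ℕ),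
        iteratedFDeriv ℝ n (fun x => a * ((ℓ j x)^A *
          ∏ i ∈ Finset.univ.erase j, (ℓ i x)^(β i))) VA
        = a • iteratedFDeriv ℝ n (fun x => (ℓ j x)^A *
          ∏ i ∈ Finset.univ.erase j, (ℓ i x)^(β i)) VA := by
      intro a β A
      have h := iteratedFDeriv_const_smul_apply' (𝕜 := ℝ) (a := a) (hcdG β A).contDiffAt (x := VA)
      simpa [smul_eq_mul] using h
    have hQrw : Qp j = fun x => ∑ β ∈ Finset.Nat.antidiagonalTuple (d + 1) ρ,
        ((c j β / (((β j + bnum).factorial : ℝ) *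
            ∏ i ∈ Finset.univ.erase j, ((β i).factorial : ℝ))) *
          ((ℓ j x)^(β j + bnum) * ∏ i ∈ Finset.univ.erase j, (ℓ i x)^(β i))) := by
      funext x
      rw [hQp j x]
      apply Finset.sum_congr rfl
      intro β _
      rw [Finset.prod_div_distrib]
      ring
    have hprw : p = fun x => ∑ β ∈ Finset.Nat.antidiagonalTuple (d + 1) ρ,
        ((c j β / (((β j).factorial : ℝ) *
            ∏ i ∈ Finset.univ.erase j, ((β i).factorial : ℝ))) *
          ((ℓ j x)^(β j) * ∏ i ∈ Finset.univ.erase j, (ℓ i x)^(β i))) := by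
      funext x
      rw [hp j x]
      apply Finset.sum_congr rfl
      intro β _
      rw [← Finset.mul_prod_erase Finset.univ
          (fun i => (ℓ i x)^(β i) / ((β i).factorial : ℝ)) (Finset.mem_univ j),
        Finset.prod_div_distrib]
      ring
    have hQd : iteratedFDeriv ℝ n (Qp j) VA
        = ∑ β ∈ Finset.Nat.antidiagonalTuple (d + 1) ρ,
          (c j β / (((β j + bnum).factorial : ℝ) *
            ∏ i ∈ Finset.univ.erase j, ((β i).factorial : ℝ))) •
          iteratedFDeriv ℝ n (fun x => (ℓ j x)^(β j + bnum) *
            ∏ i ∈ Finset.univ.erase j, (ℓ i x)^(β i)) VA := by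
      rw [hQrw]
      have key := congrFun (iteratedFDeriv_sum (𝕜 := ℝ) (i := n)
        (u := Finset.Nat.antidiagonalTuple (d + 1) ρ)
        (f := fun β x => (c j β / (((β j + bnum).factorial : ℝ) *
            ∏ i ∈ Finset.univ.erase j, ((β i).factorial : ℝ))) *
          ((ℓ j x)^(β j + bnum) * ∏ i ∈ Finset.univ.erase j, (ℓ i x)^(β i)))
        (fun β _ => contDiff_const.mul (hcdG β (β j + bnum)))) VA
      simp only [Finset.sum_apply] at key
      rw [key]
      exact Finset.sum_congr rfl (fun β _ => hsm _ β (β j + bnum))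
    have hpd : iteratedFDeriv ℝ n p VA
        = ∑ β ∈ Finset.Nat.antidiagonalTuple (d + 1) ρ,
          (c j β / (((β j).factorial : ℝ) *
            ∏ i ∈ Finset.univ.erase j, ((β i).factorial : ℝ))) •
          iteratedFDeriv ℝ n (fun x => (ℓ j x)^(β j) *
            ∏ i ∈ Finset.univ.erase j, (ℓ i x)^(β i)) VA := by
      rw [hprw]
      have key := congrFun (iteratedFDeriv_sum (𝕜 := ℝ) (i := n)
        (u := Finset.Nat.antidiagonalTuple (d + 1) ρ)
        (f := fun β x => (c j β / (((β j).factorial : ℝ) *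
            ∏ i ∈ Finset.univ.erase j, ((β i).factorial : ℝ))) *
          ((ℓ j x)^(β j) * ∏ i ∈ Finset.univ.erase j, (ℓ i x)^(β i)))
        (fun β _ => contDiff_const.mul (hcdG β (β j)))) VA
      simp only [Finset.sum_apply] at key
      rw [key]
      exact Finset.sum_congr rfl (fun β _ => hsm _ β (β j))
    rw [hQd, hpd, Finset.smul_sum]
    apply Finset.sum_congr rfl
    intro β hβ
    have hβsum : ∑ i, β i = ρ := Finset.Nat.mem_antidiagonalTuple.mp hβ
    have hsplit : β j + ∑ i ∈ Finset.univ.erase j, β i = ρ := by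
      rw [Finset.add_sum_erase Finset.univ β (Finset.mem_univ j)]
      exact hβsum
    rcases le_or_gt (∑ i ∈ Finset.univ.erase j, β i) n with hm | hm
    · rw [aux_G VA d j ℓ hℓVA β (β j + bnum) n hm, aux_G VA d j ℓ hℓVA β (β j) n hm]
      rw [smul_smul, smul_smul, smul_smul]
      congr 1
      set t := n - ∑ i ∈ Finset.univ.erase j, β i with htdef
      have ht : t ≤ β j := by omega
      have ht2 : t ≤ β j + bnum := by omega
      have e1 := Nat.choose_mul_factorial_mul_factorial ht
      have e2 := Nat.choose_mul_factorial_mul_factorial ht2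
      rw [show β j - t = ρ - n by omega] at e1
      rw [show β j + bnum - t = k - n by omega] at e2
      have hF1 : ((β j).factorial : ℝ) ≠ 0 := Nat.cast_ne_zero.mpr (Nat.factorial_ne_zero _)
      have hF2 : (((β j + bnum).factorial : ℝ)) ≠ 0 :=
        Nat.cast_ne_zero.mpr (Nat.factorial_ne_zero _)
      have hkn : (((k - n).factorial : ℝ)) ≠ 0 := Nat.cast_ne_zero.mpr (Nat.factorial_ne_zero _)
      have keyN : (β j + bnum).choose t * ((k - n).factorial * (β j).factorial)
          = ((ρ - n).factorial * (β j).choose t) * (β j + bnum).factorial := by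
        rw [← e1, ← e2]; ring
      have key : ((β j + bnum).choose t : ℝ) / ((β j + bnum).factorial : ℝ)
          = (((ρ - n).factorial : ℝ) / ((k - n).factorial : ℝ)) *
            (((β j).choose t : ℝ) / ((β j).factorial : ℝ)) := by
        rw [div_mul_div_comm, div_eq_div_iff hF2 (mul_ne_zero hkn hF1)]
        exact_mod_cast keyN
      calc c j β / (((β j + bnum).factorial : ℝ) *
            ∏ i ∈ Finset.univ.erase j, ((β i).factorial : ℝ)) * ((β j + bnum).choose t : ℝ)
          = (c j β / ∏ i ∈ Finset.univ.erase j, ((β i).factorial : ℝ)) *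
            (((β j + bnum).choose t : ℝ) / ((β j + bnum).factorial : ℝ)) := by
            field_simp
      _ = (c j β / ∏ i ∈ Finset.univ.erase j, ((β i).factorial : ℝ)) *
            ((((ρ - n).factorial : ℝ) / ((k - n).factorial : ℝ)) *
              (((β j).choose t : ℝ) / ((β j).factorial : ℝ))) := by rw [key]
      _ = ((ρ - n).factorial : ℝ) / ((k - n).factorial : ℝ) *
            (c j β / (((β j).factorial : ℝ) *
              ∏ i ∈ Finset.univ.erase j, ((β i).factorial : ℝ))) * ((β j).choose t : ℝ) := by
            ring
    · rw [aux_G_zero VA d j ℓ hℓVA β (β j + bnum) n hm,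
        aux_G_zero VA d j ℓ hℓVA β (β j) n hm, smul_zero, smul_zero, smul_zero]
  exact ⟨main, fun j j' n hn => by rw [main j n hn, main j' n hn]⟩
end

section
/- Let β ∈ Σ_0^{r°}(I_d, ρ), i.e., |β| = ρ and for every face F of K of dimension t with 0 ≤ t ≤ d−1, Σ_{i ∉ I_F} β_i ≥ r_{d−t} − b + 1. Then for each (d−1)-dimensional facet F of K, all derivatives of Q_k^ρ(⟦λ⟧^β) of order 0 ≤ n ≤ r_1 vanish on F. -/
open Finset

 theorem auxDeriv {E : Type} [NormedAddCommGroup E] [NormedSpace ℝ E] :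
    ∀ (n : ℕ) {F : Type} [NormedAddCommGroup F] [NormedSpace ℝ F]
      (L : E →L[ℝ] ℝ) (a : ℝ) (m : ℕ), n < m → ∀ g : E → F, ContDiff ℝ (⊤ : ℕ∞) g →
      ∀ x, L x + a = 0 → iteratedFDeriv ℝ n (fun y => (L y + a) ^ m • g y) x = 0
  | 0, F, _, _, L, a, m, hm, g, hg, x, hx => by
    ext v
    simp [iteratedFDeriv_zero_apply, hx]
    exact Or.inl (by omega)
  | (n+1), F, _, _, L, a, m, hm, g, hg, x, hx => by
    obtain ⟨m', rfl⟩ : ∃ m', m = m' + 1 := ⟨m - 1, by omega⟩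
    have hL : ∀ y : E, HasFDerivAt (fun y => L y + a) L y := fun y =>
      (L.hasFDerivAt.add_const a)
    set h : E → (E →L[ℝ] F) := fun y =>
      (L y + a) • fderiv ℝ g y + ((m' : ℝ) + 1) • L.smulRight (g y) with hh
    have hg' : ∀ y, HasFDerivAt g (fderiv ℝ g y) y :=
      fun y => (hg.differentiable (by simp) y).hasFDerivAt
    have hder : (fderiv ℝ (fun y => (L y + a) ^ (m' + 1) • g y)) =
        fun y => (L y + a) ^ m' • h y := by
      funext y
      have h1 : HasFDerivAt (fun y => (L y + a) ^ (m' + 1))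
          ((((m' + 1 : ℕ) : ℝ) * (L y + a) ^ m') • L) y := by
        simpa [Function.comp_def] using (hasDerivAt_pow (m' + 1) (L y + a)).comp_hasFDerivAt y (hL y)
      have h2 := h1.smul (hg' y)
      rw [HasFDerivAt.fderiv (f := fun y => (L y + a) ^ (m' + 1) • g y) h2]
      ext v
      simp [hh, pow_succ, smul_smul]
      ring
    have hhsmooth : ContDiff ℝ (⊤ : ℕ∞) h := by
      apply ContDiff.add
      · exact ((L.contDiff.add contDiff_const).smul (hg.fderiv_right (by simp)))
      · exact ContDiff.const_smul _
          ((ContinuousLinearMap.smulRightL ℝ E F L).contDiff.comp hg)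
    rw [iteratedFDeriv_succ_eq_comp_right]
    simp only [Function.comp_apply, hder]
    rw [auxDeriv n L a m' (by omega) h hhsmooth x hx]
    exact (continuousMultilinearCurryRightEquiv' ℝ n E F).symm.map_zero

open MvPolynomial in
theorem evalHomog {σ : Type*} {φ : MvPolynomial σ ℝ} {n : ℕ}
    (h : φ.IsHomogeneous n) (t : ℝ) (w : σ → ℝ) :
    eval (fun i => t * w i) φ = t ^ n * eval w φ := by
  rw [eval_eq, eval_eq, Finset.mul_sum]
  refine Finset.sum_congr rfl fun m hm => ?_
  have hd : m.degree = n := by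
    by_contra hne
    exact MvPolynomial.mem_support_iff.mp hm (h.coeff_eq_zero hne)
  have : ∏ i ∈ m.support, (t * w i) ^ m i
      = t ^ n * ∏ i ∈ m.support, w i ^ m i := by
    rw [← hd]
    simp_rw [mul_pow]
    rw [Finset.prod_mul_distrib, Finset.prod_pow_eq_pow_sum]
    rfl
  rw [this]; ring

open MvPolynomial in
theorem coeffXpowMul {σ : Type*} [DecidableEq σ] (i : σ) (k : ℕ) (R : MvPolynomial σ ℝ)
    (m : σ →₀ ℕ) (hm : m i < k) : coeff m (X i ^ k * R) = 0 := by
  rw [coeff_mul]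
  refine Finset.sum_eq_zero fun p hp => ?_
  rw [coeff_X_pow]
  rcases eq_or_ne (Finsupp.single i k) p.1 with h | h
  · exfalso
    have hadd : p.1 + p.2 = m := Finset.HasAntidiagonal.mem_antidiagonal.mp hp
    have : k ≤ m i := by
      have := congrArg (fun f => f i) hadd
      simp [← h] at this
      omega
    omega
  · simp [h]

theorem affDecomp {E : Type} [NormedAddCommGroup E] [NormedSpace ℝ E]
    [FiniteDimensional ℝ E] (f : E →ᵃ[ℝ] ℝ) :
    ∃ L : E →L[ℝ] ℝ, (∀ y, f y = L y + f 0) ∧ ContDiff ℝ (⊤ : ℕ∞) f := by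
  refine ⟨LinearMap.toContinuousLinearMap f.linear, fun y => ?_, ?_⟩
  · conv_lhs => rw [f.decomp]
    simp
  · have h : ⇑f = fun y => (LinearMap.toContinuousLinearMap f.linear) y + f 0 := by
      funext y
      conv_lhs => rw [f.decomp]
      simp
    rw [h]
    exact (LinearMap.toContinuousLinearMap f.linear).contDiff.add contDiff_const

/-- Let `β ∈ Σ₀^{r°}(I_d, ρ)`, i.e. `|β| = ρ` and for every face `F` of `K`
`∑_{i ∉ I_F} β_i ≥ r_{d-t} - b + 1` (`t = dim F`). Then for each facet `F` of `K`
(opposite a vertex `i₀`), all derivatives of `Q_k^ρ(⟦λ⟧^β)` of order `0 ≤ n ≤ r₁`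
vanish on `F`. -/
theorem stmt12 (d : ℕ) (hd : 2 ≤ d) (r : ℕ → ℕ) (ρ k bnum : ℕ)
    (hr1 : 1 ≤ r 1)
    (hceil1 : 1 ≤ ⌈(3 * (r 1 : ℚ) - 1) / 2⌉)
    (hceil2 : ⌈(3 * (r 1 : ℚ) - 1) / 2⌉ ≤ (r 2 : ℤ))
    (hr2 : (r 2 : ℤ) ≤ 2 * (r 1 : ℤ) - 1)
    (hchain : ∀ s, 2 ≤ s → s + 1 ≤ d →
      2 ^ (d - s) * r s ≤ 2 ^ (d - s - 1) * r (s + 1))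
    (hkr : 2 * r d + 1 ≤ k)
    (hρ : k = ρ + bnum) (hbnum : 1 ≤ bnum)
    (hb1 : 2 * (r 1 : ℤ) - (r 2 : ℤ) ≤ (bnum : ℤ))
    (hb2 : (bnum : ℤ) ≤ (r 2 : ℤ) - (r 1 : ℤ) + 1)
    (b : AffineBasis (Fin (d + 1)) ℝ (EuclideanSpace ℝ (Fin d)))
    (μ : Fin (d + 1) → ℝ) (hμ : ∀ i, 0 < μ i) (hsum : ∑ i, μ i = 1)
    (VA : EuclideanSpace ℝ (Fin d))
    (hVA : VA = Finset.univ.affineCombination ℝ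
      (b : Fin (d + 1) → EuclideanSpace ℝ (Fin d)) μ)
    (bj : Fin (d + 1) → AffineBasis (Fin (d + 1)) ℝ (EuclideanSpace ℝ (Fin d)))
    (hbj : ∀ j i, bj j i = if i = j then VA else b i)
    (β : Fin (d + 1) → ℕ) (hβsum : ∑ i, β i = ρ)
    (hβface : ∀ IF : Finset (Fin (d + 1)), IF.Nonempty → IF ≠ Finset.univ →
      (r (d - (IF.card - 1)) : ℤ) - (bnum : ℤ) + 1 ≤ ∑ i ∈ IFᶜ, (β i : ℤ))
    (c : Fin (d + 1) → (Fin (d + 1) → ℕ) → ℝ)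
    (hc : ∀ j x, (∏ i, (b.coord i x) ^ (β i) / ((β i).factorial : ℝ)) =
      ∑ β' ∈ Finset.Nat.antidiagonalTuple (d + 1) ρ,
        c j β' * ∏ i, ((bj j).coord i x) ^ (β' i) / ((β' i).factorial : ℝ))
    (Qp : Fin (d + 1) → EuclideanSpace ℝ (Fin d) → ℝ)
    (hQp : ∀ j x, Qp j x = ∑ β' ∈ Finset.Nat.antidiagonalTuple (d + 1) ρ,
      c j β' * (((bj j).coord j x) ^ (β' j + bnum) / ((β' j + bnum).factorial : ℝ) *
        ∏ i ∈ Finset.univ.erase j, ((bj j).coord i x) ^ (β' i) / ((β' i).factorial : ℝ))) :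
    ∀ i₀ : Fin (d + 1), ∀ n, n ≤ r 1 →
      ∀ x : EuclideanSpace ℝ (Fin d), b.coord i₀ x = 0 →
        iteratedFDeriv ℝ n (Qp i₀) x = 0 := by
  intro i₀ n hn x hx
  classical
  -- coordinates of VA
  have hcoordVA : ∀ i, b.coord i VA = μ i := by
    intro i
    rw [hVA, Finset.univ.map_affineCombination _ μ hsum (b.coord i),
      Finset.univ.affineCombination_eq_linear_combination _ _ hsum]
    simp [Function.comp, AffineBasis.coord_apply, mul_ite]
  -- the coordinate relation
  have hK1 : ∀ (i : Fin (d + 1)) (y : EuclideanSpace ℝ (Fin d)),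
      b.coord i y = if i = i₀ then μ i₀ * (bj i₀).coord i₀ y
        else (bj i₀).coord i y + μ i * (bj i₀).coord i₀ y := by
    intro i y
    have hw1 : ∑ j, (bj i₀).coord j y = 1 := (bj i₀).sum_coord_apply_eq_one y
    conv_lhs => rw [← (bj i₀).affineCombination_coord_eq_self y]
    rw [Finset.univ.map_affineCombination _ _ hw1 (b.coord i),
      Finset.univ.affineCombination_eq_linear_combination _ _ hw1]
    have hval : ∀ j, (⇑(b.coord i) ∘ ⇑(bj i₀)) j
        = if j = i₀ then μ i else if i = j then 1 else 0 := by
      intro j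
      simp only [Function.comp_apply, hbj i₀ j]
      by_cases hj : j = i₀
      · simp [hj, hcoordVA]
      · simp [hj, AffineBasis.coord_apply]
    simp only [hval, smul_eq_mul]
    by_cases hi : i = i₀
    · rw [if_pos hi]
      simp only [hi]
      have : ∀ j : Fin (d + 1), (bj i₀).coord j y * (if j = i₀ then μ i₀ else if i₀ = j then 1 else 0)
          = if j = i₀ then (bj i₀).coord i₀ y * μ i₀ else 0 := by
        intro j
        by_cases hj : j = i₀
        · simp [hj]
        · simp [hj, Ne.symm hj]
      rw [Finset.sum_congr rfl fun j _ => this j, Finset.sum_ite_eq' Finset.univ i₀]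
      simp [mul_comm]
    · rw [if_neg hi]
      have : ∀ j : Fin (d + 1), (bj i₀).coord j y * (if j = i₀ then μ i else if i = j then 1 else 0)
          = (if j = i₀ then (bj i₀).coord i₀ y * μ i else 0)
            + (if j = i then (bj i₀).coord i y else 0) := by
        intro j
        by_cases hj : j = i₀
        · subst hj
          simp [Ne.symm hi, hi]
        · by_cases hji : j = i
          · subst hji
            simp [hj]
          · simp [hj, hji, Ne.symm hji]
      rw [Finset.sum_congr rfl fun j _ => this j, Finset.sum_add_distrib,
        Finset.sum_ite_eq' Finset.univ i₀, Finset.sum_ite_eq' Finset.univ i]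
      simp
      ring
  -- vanishing of bad coefficients
  have hfact : ∀ m : ℕ, ((m.factorial : ℝ)) ≠ 0 :=
    fun m => Nat.cast_ne_zero.mpr m.factorial_ne_zero
  have hcoef : ∀ β' ∈ Finset.Nat.antidiagonalTuple (d + 1) ρ,
      β' i₀ < β i₀ → c i₀ β' = 0 := by
    set gp : Fin (d + 1) → MvPolynomial (Fin (d + 1)) ℝ :=
      fun i => if i = i₀ then MvPolynomial.C (μ i) * MvPolynomial.X i₀
        else MvPolynomial.X i + MvPolynomial.C (μ i) * MvPolynomial.X i₀ with hgp
    set P : MvPolynomial (Fin (d + 1)) ℝ :=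
      (MvPolynomial.C (∏ i, ((β i).factorial : ℝ)⁻¹)) * ∏ i, gp i ^ β i with hP
    set Q : MvPolynomial (Fin (d + 1)) ℝ :=
      ∑ β' ∈ Finset.Nat.antidiagonalTuple (d + 1) ρ,
        MvPolynomial.monomial (Finsupp.equivFunOnFinite.symm β')
          (c i₀ β' * ∏ i, ((β' i).factorial : ℝ)⁻¹) with hQdef
    have hevalP : ∀ w : Fin (d + 1) → ℝ, MvPolynomial.eval w P
        = (∏ i, (if i = i₀ then μ i * w i₀ else w i + μ i * w i₀) ^ β i)
          * ∏ i, ((β i).factorial : ℝ)⁻¹ := by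
      intro w
      rw [hP, map_mul, MvPolynomial.eval_C, map_prod, mul_comm]
      congr 1
      refine Finset.prod_congr rfl fun i _ => ?_
      rw [map_pow]
      congr 1
      by_cases hi : i = i₀ <;> simp [hgp, hi]
    have hevalQ : ∀ w : Fin (d + 1) → ℝ, MvPolynomial.eval w Q
        = ∑ β' ∈ Finset.Nat.antidiagonalTuple (d + 1) ρ,
            c i₀ β' * ((∏ i, w i ^ β' i) * ∏ i, ((β' i).factorial : ℝ)⁻¹) := by
      intro w
      rw [hQdef, map_sum]
      refine Finset.sum_congr rfl fun β' _ => ?_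
      rw [MvPolynomial.eval_monomial]
      rw [Finsupp.prod_fintype _ _ (fun i => pow_zero _)]
      simp only [Finsupp.coe_equivFunOnFinite_symm]
      ring
    -- the identity on the hyperplane
    have hPQ1 : ∀ w : Fin (d + 1) → ℝ, ∑ i, w i = 1 →
        MvPolynomial.eval w P = MvPolynomial.eval w Q := by
      intro w hw
      set xw := Finset.univ.affineCombination ℝ (⇑(bj i₀)) w with hxw
      have hco : ∀ i, (bj i₀).coord i xw = w i := fun i =>
        (bj i₀).coord_apply_combination_of_mem (Finset.mem_univ i) hw
      have hbc : ∀ i, b.coord i xw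
          = (if i = i₀ then μ i * w i₀ else w i + μ i * w i₀) := by
        intro i
        rw [hK1 i xw, hco, hco]
        by_cases hi : i = i₀ <;> simp [hi]
      have hid := hc i₀ xw
      simp only [div_eq_mul_inv] at hid
      rw [Finset.prod_mul_distrib] at hid
      calc MvPolynomial.eval w P
          = (∏ i, (b.coord i xw) ^ β i) * ∏ i, ((β i).factorial : ℝ)⁻¹ := by
            rw [hevalP w]
            congr 1
            exact Finset.prod_congr rfl fun i _ => by rw [hbc i]
        _ = ∑ β' ∈ Finset.Nat.antidiagonalTuple (d + 1) ρ,
              c i₀ β' * ((∏ i, ((bj i₀).coord i xw) ^ β' i) * ∏ i, ((β' i).factorial : ℝ)⁻¹) := by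
            rw [hid]
            exact Finset.sum_congr rfl fun β' _ => by rw [Finset.prod_mul_distrib]
        _ = MvPolynomial.eval w Q := by
            rw [hevalQ w]
            refine Finset.sum_congr rfl fun β' _ => ?_
            congr 2
            exact Finset.prod_congr rfl fun i _ => by rw [hco i]
    -- homogeneity
    have hgph : ∀ i, (gp i).IsHomogeneous 1 := by
      intro i
      by_cases hi : i = i₀
      · rw [hgp]; simp only [hi, if_pos rfl]
        exact (MvPolynomial.isHomogeneous_X _ _).C_mul _
      · rw [hgp]; simp only [if_neg hi]
        exact (MvPolynomial.isHomogeneous_X _ _).add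
          ((MvPolynomial.isHomogeneous_X _ _).C_mul _)
    have hPhom : P.IsHomogeneous ρ := by
      have h1 : (∏ i, gp i ^ β i).IsHomogeneous (∑ i, 1 * β i) :=
        MvPolynomial.IsHomogeneous.prod _ _ _ (fun i _ => (hgph i).pow (β i))
      have h2 : ∑ i : Fin (d + 1), 1 * β i = ρ := by simpa using hβsum
      rw [h2] at h1
      exact h1.C_mul _
    have hQhom : Q.IsHomogeneous ρ := by
      refine MvPolynomial.IsHomogeneous.sum _ _ _
        (fun β' hβ' => MvPolynomial.isHomogeneous_monomial _ ?_)
      have hsum' : ∑ i, β' i = ρ := (Finset.Nat.mem_antidiagonalTuple).mp hβ'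
      rw [Finsupp.degree_apply]
      rw [Finset.sum_subset (Finset.subset_univ _)
        (fun i _ h => Finsupp.notMem_support_iff.mp h)]
      simpa using hsum'
    -- the polynomial identity
    have hPQ : P = Q := by
      have hzero : ∀ w : Fin (d + 1) → ℝ,
          MvPolynomial.eval w ((P - Q) * ∑ i, MvPolynomial.X i) = 0 := by
        intro w
        rw [map_mul, map_sub]
        rcases eq_or_ne (∑ i, w i) 0 with hs | hs
        · have h0 : MvPolynomial.eval w (∑ i : Fin (d + 1), MvPolynomial.X i) = 0 := by
            simpa using hs
          rw [h0, mul_zero]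
        · have hv : ∑ i, w i / (∑ j, w j) = 1 := by
            rw [← Finset.sum_div, div_self hs]
          have hw' : w = fun i => (∑ j, w j) * (w i / (∑ j, w j)) := by
            funext i; field_simp
          have h1 : MvPolynomial.eval w P
              = (∑ j, w j) ^ ρ * MvPolynomial.eval (fun i => w i / ∑ j, w j) P := by
            conv_lhs => rw [hw']
            exact evalHomog hPhom _ _
          have h2 : MvPolynomial.eval w Q
              = (∑ j, w j) ^ ρ * MvPolynomial.eval (fun i => w i / ∑ j, w j) Q := by
            conv_lhs => rw [hw']
            exact evalHomog hQhom _ _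
          rw [h1, h2, hPQ1 _ hv, sub_self, zero_mul]
      have hfun := MvPolynomial.funext
        (p := (P - Q) * ∑ i, MvPolynomial.X i) (q := 0) (by simpa using hzero)
      have hXne : (∑ i : Fin (d + 1), MvPolynomial.X i : MvPolynomial (Fin (d + 1)) ℝ) ≠ 0 := by
        intro h
        have h1 := congrArg (MvPolynomial.eval (fun _ => (1 : ℝ))) h
        simp [Finset.card_univ] at h1
        have hpos : (0:ℝ) < (d:ℝ) + 1 := by positivity
        linarith
      rcases mul_eq_zero.mp hfun with h | h
      · exact sub_eq_zero.mp h
      · exact absurd h hXne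
    -- extract coefficients
    intro β' hβ' hlt
    have hm := congrArg (MvPolynomial.coeff (Finsupp.equivFunOnFinite.symm β')) hPQ
    have hdvd : MvPolynomial.X (R := ℝ) i₀ ^ β i₀ ∣ P := by
      have h1 : MvPolynomial.X (R := ℝ) i₀ ^ β i₀ ∣ gp i₀ ^ β i₀ := by
        rw [hgp]
        simp only [eq_self_iff_true, if_true]
        rw [mul_pow]
        exact Dvd.intro_left _ rfl
      exact (h1.trans (Finset.dvd_prod_of_mem (fun i => gp i ^ β i) (Finset.mem_univ i₀))).mul_left _
    obtain ⟨R, hR⟩ := hdvd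
    have hcP : MvPolynomial.coeff (Finsupp.equivFunOnFinite.symm β') P = 0 := by
      rw [hR]
      exact coeffXpowMul i₀ (β i₀) R _ (by simpa using hlt)
    have hcQ : MvPolynomial.coeff (Finsupp.equivFunOnFinite.symm β') Q
        = c i₀ β' * ∏ i, ((β' i).factorial : ℝ)⁻¹ := by
      rw [hQdef, MvPolynomial.coeff_sum]
      rw [Finset.sum_eq_single β']
      · rw [MvPolynomial.coeff_monomial, if_pos rfl]
      · intro β'' hβ'' hne
        rw [MvPolynomial.coeff_monomial, if_neg]
        exact fun h => hne (Finsupp.equivFunOnFinite.symm.injective h)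
      · intro h; exact absurd hβ' h
    rw [hcP, hcQ] at hm
    have hprodne : (∏ i, ((β' i).factorial : ℝ)⁻¹) ≠ 0 :=
      Finset.prod_ne_zero_iff.mpr fun i _ => inv_ne_zero (hfact _)
    rcases mul_eq_zero.mp hm.symm with h | h
    · exact h
    · exact absurd h hprodne
  -- the facet inequality
  have hr1b : r 1 + 1 ≤ β i₀ + bnum := by
    have hne : (Finset.univ.erase i₀).Nonempty := by
      rw [← Finset.card_pos, Finset.card_erase_of_mem (Finset.mem_univ _), Finset.card_univ]
      simp only [Fintype.card_fin]
      omega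
    have hneu : (Finset.univ.erase i₀) ≠ Finset.univ := by
      intro h
      have h2 := Finset.mem_univ i₀
      rw [← h] at h2
      exact (Finset.notMem_erase i₀ _) h2
    have h := hβface (Finset.univ.erase i₀) hne hneu
    have hcompl : (Finset.univ.erase i₀)ᶜ = {i₀} := by
      rw [Finset.compl_erase]
      simp
    have hcard : (Finset.univ.erase i₀).card = d := by
      rw [Finset.card_erase_of_mem (Finset.mem_univ _), Finset.card_univ]
      simp
    rw [hcompl, Finset.sum_singleton, hcard] at h
    have hd1 : d - (d - 1) = 1 := by omega
    rw [hd1] at h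
    omega
  -- decomposition of the i₀-th coordinate of bj i₀
  obtain ⟨L, hLrep, hLsm⟩ := affDecomp ((bj i₀).coord i₀)
  have hAx : ((bj i₀).coord i₀) x = 0 := by
    have h := hK1 i₀ x
    rw [if_pos rfl, hx] at h
    rcases mul_eq_zero.mp h.symm with h' | h'
    · exact absurd h' (hμ i₀).ne'
    · exact h'
  have hLx : L x + ((bj i₀).coord i₀) 0 = 0 := by
    rw [← hLrep x]
    exact hAx
  have hcoordSm : ∀ i : Fin (d + 1), ContDiff ℝ (⊤ : ℕ∞) fun y => ((bj i₀).coord i) y := by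
    intro i
    obtain ⟨_, _, hsm⟩ := affDecomp ((bj i₀).coord i)
    exact hsm
  have hQf : Qp i₀ = (fun y => ∑ β' ∈ Finset.Nat.antidiagonalTuple (d + 1) ρ,
      c i₀ β' * (((bj i₀).coord i₀ y) ^ (β' i₀ + bnum) / ((β' i₀ + bnum).factorial : ℝ) *
        ∏ i ∈ Finset.univ.erase i₀,
          ((bj i₀).coord i y) ^ (β' i) / ((β' i).factorial : ℝ))) :=
    funext (hQp i₀)
  have hsm : ∀ β' ∈ Finset.Nat.antidiagonalTuple (d + 1) ρ,
      ContDiff ℝ (n : ℕ) (fun y => c i₀ β' *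
        (((bj i₀).coord i₀ y) ^ (β' i₀ + bnum) / ((β' i₀ + bnum).factorial : ℝ) *
          ∏ i ∈ Finset.univ.erase i₀,
            ((bj i₀).coord i y) ^ (β' i) / ((β' i).factorial : ℝ))) := by
    intro β' _
    have h1 : ContDiff ℝ (⊤ : ℕ∞) (fun y => c i₀ β' *
        (((bj i₀).coord i₀ y) ^ (β' i₀ + bnum) / ((β' i₀ + bnum).factorial : ℝ) *
          ∏ i ∈ Finset.univ.erase i₀,
            ((bj i₀).coord i y) ^ (β' i) / ((β' i).factorial : ℝ))) :=
      contDiff_const.mul ((((hcoordSm i₀).pow _).div_const _).mul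
        (contDiff_prod fun i _ => ((hcoordSm i).pow _).div_const _))
    exact h1.of_le (by exact_mod_cast le_top)
  have hsumd : iteratedFDeriv ℝ n (fun y => ∑ β' ∈ Finset.Nat.antidiagonalTuple (d + 1) ρ,
      c i₀ β' * (((bj i₀).coord i₀ y) ^ (β' i₀ + bnum) / ((β' i₀ + bnum).factorial : ℝ) *
        ∏ i ∈ Finset.univ.erase i₀,
          ((bj i₀).coord i y) ^ (β' i) / ((β' i).factorial : ℝ)))
      = ∑ β' ∈ Finset.Nat.antidiagonalTuple (d + 1) ρ,
        iteratedFDeriv ℝ n (fun y => c i₀ β' *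
          (((bj i₀).coord i₀ y) ^ (β' i₀ + bnum) / ((β' i₀ + bnum).factorial : ℝ) *
            ∏ i ∈ Finset.univ.erase i₀,
              ((bj i₀).coord i y) ^ (β' i) / ((β' i).factorial : ℝ))) :=
    iteratedFDeriv_sum hsm
  rw [hQf, hsumd, Finset.sum_apply]
  refine Finset.sum_eq_zero fun β' hβ' => ?_
  by_cases hc0 : c i₀ β' = 0
  · have hzf : (fun y => c i₀ β' *
        (((bj i₀).coord i₀ y) ^ (β' i₀ + bnum) / ((β' i₀ + bnum).factorial : ℝ) *
          ∏ i ∈ Finset.univ.erase i₀,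
            ((bj i₀).coord i y) ^ (β' i) / ((β' i).factorial : ℝ)))
        = (fun _ => (0 : ℝ)) := by
      funext y
      rw [hc0]
      ring
    rw [hzf, iteratedFDeriv_zero_fun]
    rfl
  · have hge : β i₀ ≤ β' i₀ := not_lt.mp (fun hlt => hc0 (hcoef β' hβ' hlt))
    have hnM : n < β' i₀ + bnum := by omega
    have hgsm : ContDiff ℝ (⊤ : ℕ∞) (fun y =>
        (c i₀ β' / (((β' i₀ + bnum).factorial : ℝ))) *
          ∏ i ∈ Finset.univ.erase i₀,
            ((bj i₀).coord i y) ^ (β' i) / ((β' i).factorial : ℝ)) :=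
      contDiff_const.mul (contDiff_prod fun i _ => ((hcoordSm i).pow _).div_const _)
    have heq : (fun y => c i₀ β' *
        (((bj i₀).coord i₀ y) ^ (β' i₀ + bnum) / ((β' i₀ + bnum).factorial : ℝ) *
          ∏ i ∈ Finset.univ.erase i₀,
            ((bj i₀).coord i y) ^ (β' i) / ((β' i).factorial : ℝ)))
        = fun y => (L y + ((bj i₀).coord i₀) 0) ^ (β' i₀ + bnum) •
            ((c i₀ β' / (((β' i₀ + bnum).factorial : ℝ))) *
              ∏ i ∈ Finset.univ.erase i₀,
                ((bj i₀).coord i y) ^ (β' i) / ((β' i).factorial : ℝ)) := by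
      funext y
      rw [← hLrep y]
      simp only [smul_eq_mul]
      ring
    rw [heq]
    exact auxDeriv n L _ _ hnM _ hgsm x hLx
end

section
/- Define B_{0,n} := 1 and, for 1 ≤ t ≤ d−1 and 0 ≤ n ≤ r_{d−t}, define B_{t,n} := #Σ_0^{q_{t,n}}(I_t, k−n), the number of multi-indices σ ∈ ℕ^{t+1} with |σ| = k−n such that for every proper face E of the t-simplex of dimension t', Σ_{i∉I_E} σ_i ≥ r_{d−t'} − n + 1. Then B_{t,n} = C(k−n+t, t) − Σ_{t'=0}^{t−1} C(t+1, t'+1) Σ_{n'=n}^{r_{d−t'}} C(n'−n+t−t'−1, t−t'−1) B_{t',n'}. -/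
open Finset

lemma card_adt (q m : ℕ) :
    (Finset.Nat.antidiagonalTuple q m).card = Nat.multichoose q m := by
  rw [← Finset.piAntidiag_univ_fin_eq_antidiagonalTuple, ← Finset.map_sym_eq_piAntidiag,
    Finset.card_map, Finset.sym_univ]
  rw [show (univ : Finset (Sym (Fin q) m)).card = Fintype.card (Sym (Fin q) m) from rfl,
    Sym.card_sym_eq_multichoose, Fintype.card_fin]

lemma card_adt' (q m : ℕ) (hq : 1 ≤ q) :
    (Finset.Nat.antidiagonalTuple q m).card = (m + q - 1).choose (q - 1) := by
  rw [card_adt, Nat.multichoose_eq]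
  have h1 : q + m - 1 = m + (q - 1) := by omega
  have h2 : m + q - 1 = m + (q - 1) := by omega
  rw [h1, h2, Nat.choose_symm_add]


section aux
variable {r : ℕ → ℕ} {d k : ℕ}

lemma rsum_le (hmono : ∀ a b, 1 ≤ a → a ≤ b → b ≤ d → r a ≤ r b)
    (hdouble : ∀ s, 2 ≤ s → s + 1 ≤ d → 2 * r s ≤ r (s + 1))
    {a1 a2 c : ℕ} (h1 : 1 ≤ a1) (h2 : 1 ≤ a2) (h1c : a1 < c) (h2c : a2 < c)
    (hcd : c ≤ d) (hc3 : 3 ≤ c) : r a1 + r a2 ≤ r c := by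
  have m1 : r a1 ≤ r (c - 1) := hmono a1 (c - 1) h1 (by omega) (by omega)
  have m2 : r a2 ≤ r (c - 1) := hmono a2 (c - 1) h2 (by omega) (by omega)
  have hd : 2 * r (c - 1) ≤ r c := by
    have := hdouble (c - 1) (by omega) (by omega)
    have hc : c - 1 + 1 = c := by omega
    rwa [hc] at this
  omega

/-- Uniqueness of the minimal violated face. -/
lemma minviol_unique (hmono : ∀ a b, 1 ≤ a → a ≤ b → b ≤ d → r a ≤ r b)
    (hdouble : ∀ s, 2 ≤ s → s + 1 ≤ d → 2 * r s ≤ r (s + 1))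
    (hk' : 2 * r d < k) {q : ℕ} (hq : q ≤ d)
    (σ : Fin q → ℕ) (hσ : ∑ i, σ i ≤ k)
    (E₁ E₂ : Finset (Fin q))
    (hne₁ : E₁.Nonempty) (hu₁ : E₁ ≠ univ)
    (hv₁ : k ≤ ∑ i ∈ E₁, σ i + r (d - (E₁.card - 1)))
    (hmin₁ : ∀ F, F ⊂ E₁ → F.Nonempty → ∑ i ∈ F, σ i + r (d - (F.card - 1)) < k)
    (hne₂ : E₂.Nonempty) (hu₂ : E₂ ≠ univ)
    (hv₂ : k ≤ ∑ i ∈ E₂, σ i + r (d - (E₂.card - 1)))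
    (hmin₂ : ∀ F, F ⊂ E₂ → F.Nonempty → ∑ i ∈ F, σ i + r (d - (F.card - 1)) < k) :
    E₁ = E₂ := by
  classical
  by_contra hne
  -- basic card facts
  have hcard₁ : 1 ≤ E₁.card := Finset.card_pos.mpr hne₁
  have hcard₂ : 1 ≤ E₂.card := Finset.card_pos.mpr hne₂
  have hcardq : q = Fintype.card (Fin q) := (Fintype.card_fin q).symm
  have hcu₁ : E₁.card < q := by
    have := (Finset.card_lt_iff_ne_univ E₁).mpr hu₁
    simpa using this
  have hcu₂ : E₂.card < q := by
    have := (Finset.card_lt_iff_ne_univ E₂).mpr hu₂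
    simpa using this
  have hqd2 : 2 ≤ q := by omega
  -- sums
  have hsum_union_inter :
      ∑ i ∈ E₁ ∪ E₂, σ i + ∑ i ∈ E₁ ∩ E₂, σ i = ∑ i ∈ E₁, σ i + ∑ i ∈ E₂, σ i :=
    Finset.sum_union_inter
  have hunion_le : ∑ i ∈ E₁ ∪ E₂, σ i ≤ k := by
    refine le_trans ?_ hσ
    exact Finset.sum_le_sum_of_subset (Finset.subset_univ _)
  have hr₁d : r (d - (E₁.card - 1)) ≤ r d :=
    hmono _ d (by omega) (by omega) le_rfl
  have hr₂d : r (d - (E₂.card - 1)) ≤ r d :=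
    hmono _ d (by omega) (by omega) le_rfl
  -- the intersection is nonempty
  have hMne : (E₁ ∩ E₂).Nonempty := by
    rcases Finset.eq_empty_or_nonempty (E₁ ∩ E₂) with hM | hM
    · -- disjoint violated faces: impossible
      have hz : ∑ i ∈ E₁ ∩ E₂, σ i = 0 := by rw [hM]; simp
      omega
    · exact hM
  set M := E₁ ∩ E₂ with hMdef
  have hMsub₁ : M ⊆ E₁ := Finset.inter_subset_left
  have hMsub₂ : M ⊆ E₂ := Finset.inter_subset_right
  have hMcard : 1 ≤ M.card := Finset.card_pos.mpr hMne
  -- M is a proper subset of E₁ or E₂ (it can't equal both since E₁ ≠ E₂)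
  have hssub : M ⊂ E₁ ∨ M ⊂ E₂ := by
    by_contra h
    push_neg at h
    have h1 : M = E₁ := by
      by_contra h1
      exact h.1 (Finset.ssubset_iff_subset_ne.mpr ⟨hMsub₁, h1⟩)
    have h2 : M = E₂ := by
      by_contra h2
      exact h.2 (Finset.ssubset_iff_subset_ne.mpr ⟨hMsub₂, h2⟩)
    exact hne (h1 ▸ h2)
  rcases hssub with hss | hss
  · -- M ⊊ E₁ : show M is violated, contradicting minimality of E₁
    rcases eq_or_ne M E₂ with h2 | h2
    · -- M = E₂, so E₂ ⊊ E₁, contradicting minimality of E₁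
      exact absurd hv₂ (not_le.mpr (hmin₁ E₂ (h2 ▸ hss) hne₂))
    · -- M strictly inside both
      have hss2 : M ⊂ E₂ := Finset.ssubset_iff_subset_ne.mpr ⟨hMsub₂, h2⟩
      have hMc₁ : M.card < E₁.card := Finset.card_lt_card hss
      have hMc₂ : M.card < E₂.card := Finset.card_lt_card hss2
      have hrsum : r (d - (E₁.card - 1)) + r (d - (E₂.card - 1)) ≤ r (d - (M.card - 1)) :=
        rsum_le hmono hdouble (by omega) (by omega) (by omega) (by omega) (by omega) (by omega)
      have : k ≤ ∑ i ∈ M, σ i + r (d - (M.card - 1)) := by omega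
      exact absurd this (not_le.mpr (hmin₁ M hss hMne))
  · rcases eq_or_ne M E₁ with h1 | h1
    · exact absurd hv₁ (not_le.mpr (hmin₂ E₁ (h1 ▸ hss) hne₁))
    · have hss1 : M ⊂ E₁ := Finset.ssubset_iff_subset_ne.mpr ⟨hMsub₁, h1⟩
      have hMc₁ : M.card < E₁.card := Finset.card_lt_card hss1
      have hMc₂ : M.card < E₂.card := Finset.card_lt_card hss
      have hrsum : r (d - (E₁.card - 1)) + r (d - (E₂.card - 1)) ≤ r (d - (M.card - 1)) :=
        rsum_le hmono hdouble (by omega) (by omega) (by omega) (by omega) (by omega) (by omega)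
      have : k ≤ ∑ i ∈ M, σ i + r (d - (M.card - 1)) := by omega
      exact absurd this (not_le.mpr (hmin₂ M hss hMne))

end aux

open scoped Classical in
noncomputable def goodSet (r : ℕ → ℕ) (d k q m : ℕ) : Finset (Fin q → ℕ) :=
  (Finset.Nat.antidiagonalTuple q m).filter
    (fun σ => ∀ E : Finset (Fin q), E.Nonempty → E ≠ univ →
      ∑ i ∈ E, σ i + r (d - (E.card - 1)) < k)

open scoped Classical in
noncomputable def strat (r : ℕ → ℕ) (d k t n : ℕ) (E : Finset (Fin (t + 1))) :
    Finset (Fin (t + 1) → ℕ) :=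
  (Finset.Nat.antidiagonalTuple (t + 1) (k - n)).filter
    (fun σ => k ≤ ∑ i ∈ E, σ i + r (d - (E.card - 1)) ∧
      ∀ F : Finset (Fin (t + 1)), F ⊂ E → F.Nonempty →
        ∑ i ∈ F, σ i + r (d - (F.card - 1)) < k)

lemma strat_card (r : ℕ → ℕ) (d k t n t' : ℕ) (E : Finset (Fin (t + 1)))
    (hE : E.card = t' + 1) (ht' : t' < t) (hn : n ≤ k) (hRk : r (d - t') < k) :
    (strat r d k t n E).card =
      ((Finset.Icc n (r (d - t'))).sigma (fun n' =>
        (goodSet r d k (t' + 1) (k - n')) ×ˢ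
          (Finset.Nat.antidiagonalTuple (t - t') (n' - n)))).card := by
  classical
  have hEc : Eᶜ.card = t - t' := by
    have := Finset.card_compl E
    simp only [Fintype.card_fin, hE] at this
    omega
  set eE : Fin (t' + 1) ≃ {x // x ∈ E} := (E.equivFin.trans (finCongr hE)).symm with heE
  set eC : Fin (t - t') ≃ {x // x ∈ Eᶜ} := (Eᶜ.equivFin.trans (finCongr hEc)).symm with heC
  have sumE : ∀ σ : Fin (t + 1) → ℕ, ∑ j, σ (eE j) = ∑ x ∈ E, σ x := by
    intro σ
    rw [← Finset.sum_coe_sort E σ]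
    exact Equiv.sum_comp eE (fun x => σ (x : Fin (t + 1)))
  have sumC : ∀ σ : Fin (t + 1) → ℕ, ∑ j, σ (eC j) = ∑ x ∈ Eᶜ, σ x := by
    intro σ
    rw [← Finset.sum_coe_sort Eᶜ σ]
    exact Equiv.sum_comp eC (fun x => σ (x : Fin (t + 1)))
  have rindex : d - (E.card - 1) = d - t' := by rw [hE]; simp
  apply Finset.card_bij'
    (i := fun σ _ => (⟨k - ∑ x ∈ E, σ x,
      (fun j => σ (eE j), fun j => σ (eC j))⟩ :
        Σ _ : ℕ, (Fin (t' + 1) → ℕ) × (Fin (t - t') → ℕ)))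
    (j := fun p _ => fun x =>
      if hx : x ∈ E then p.2.1 (eE.symm ⟨x, hx⟩)
      else p.2.2 (eC.symm ⟨x, Finset.mem_compl.mpr hx⟩))
  · -- forward membership
    rintro σ hσ
    rw [strat, Finset.mem_filter, Finset.Nat.mem_antidiagonalTuple] at hσ
    obtain ⟨hsum, hviol, hmin⟩ := hσ
    have hSE : ∑ x ∈ E, σ x ≤ k - n :=
      hsum ▸ Finset.sum_le_sum_of_subset (Finset.subset_univ E)
    rw [rindex] at hviol
    set S := ∑ x ∈ E, σ x with hS
    have hn'mem : k - S ∈ Finset.Icc n (r (d - t')) := by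
      rw [Finset.mem_Icc]; omega
    rw [Finset.mem_sigma]
    dsimp only
    refine ⟨hn'mem, ?_⟩
    rw [Finset.mem_product]
    constructor
    · rw [goodSet, Finset.mem_filter, Finset.Nat.mem_antidiagonalTuple]
      refine ⟨by rw [sumE]; omega, ?_⟩
      intro F hFne hFu
      set F' : Finset (Fin (t + 1)) := F.image (fun j => (eE j : Fin (t + 1))) with hF'
      have hinj : Function.Injective (fun j => (eE j : Fin (t + 1))) :=
        Subtype.coe_injective.comp eE.injective
      have hcard : F'.card = F.card := Finset.card_image_of_injective _ hinj
      have hsub : F' ⊆ E := by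
        intro x hx
        rw [hF', Finset.mem_image] at hx
        obtain ⟨j, _, rfl⟩ := hx
        exact (eE j).2
      have hFcard : F.card < t' + 1 := by
        have := (Finset.card_lt_iff_ne_univ F).mpr hFu
        simpa using this
      have hss : F' ⊂ E := Finset.ssubset_iff_subset_ne.mpr ⟨hsub, by
        intro h
        rw [← h, hcard] at hE
        omega⟩
      have hF'ne : F'.Nonempty := hFne.image _
      have hm := hmin F' hss hF'ne
      have hsumF : ∑ x ∈ F', σ x = ∑ j ∈ F, σ (eE j) :=
        Finset.sum_image (fun a _ b _ h => hinj h)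
      rw [hsumF, hcard] at hm
      exact hm
    · rw [Finset.Nat.mem_antidiagonalTuple, sumC]
      have hcompl : ∑ x ∈ E, σ x + ∑ x ∈ Eᶜ, σ x = k - n := by
        rw [Finset.sum_add_sum_compl E σ]; exact hsum
      omega
  · -- backward membership
    rintro ⟨n', τ, υ⟩ hp
    rw [Finset.mem_sigma, Finset.mem_Icc, Finset.mem_product, goodSet, Finset.mem_filter,
      Finset.Nat.mem_antidiagonalTuple, Finset.Nat.mem_antidiagonalTuple] at hp
    dsimp only at hp
    obtain ⟨⟨hn1, hn2⟩, ⟨hτsum, hτgood⟩, hυsum⟩ := hp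
    simp only
    set σ : Fin (t + 1) → ℕ := fun x =>
      if hx : x ∈ E then τ (eE.symm ⟨x, hx⟩)
      else υ (eC.symm ⟨x, Finset.mem_compl.mpr hx⟩) with hσdef
    have hσE : ∀ x (hx : x ∈ E), σ x = τ (eE.symm ⟨x, hx⟩) := by
      intro x hx; simp only [hσdef, dif_pos hx]
    have hσC : ∀ x (hx : x ∉ E), σ x = υ (eC.symm ⟨x, Finset.mem_compl.mpr hx⟩) := by
      intro x hx; simp only [hσdef, dif_neg hx]
    have hsumE : ∑ x ∈ E, σ x = k - n' := by
      rw [← sumE, show ∑ j, σ (eE j) = ∑ j, τ j from Finset.sum_congr rfl (fun j _ => by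
        rw [hσE _ (eE j).2]
        exact congrArg τ (eE.symm_apply_apply j))]
      exact hτsum
    have hsumC : ∑ x ∈ Eᶜ, σ x = n' - n := by
      rw [← sumC, show ∑ j, σ (eC j) = ∑ j, υ j from Finset.sum_congr rfl (fun j _ => by
        rw [hσC _ (Finset.mem_compl.mp (eC j).2)]
        exact congrArg υ (eC.symm_apply_apply j))]
      exact hυsum
    rw [strat, Finset.mem_filter, Finset.Nat.mem_antidiagonalTuple]
    have htot : ∑ x, σ x = k - n := by
      rw [← Finset.sum_add_sum_compl E σ, hsumE, hsumC]
      omega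
    refine ⟨htot, ?_, ?_⟩
    · rw [rindex, hsumE]; omega
    · intro F hFss hFne
      have hFsub : F ⊆ E := hFss.subset
      set G : Finset (Fin (t' + 1)) :=
        F.attach.image (fun x => eE.symm ⟨x.1, hFsub x.2⟩) with hG
      have hinj : Set.InjOn (fun x : {y // y ∈ F} => eE.symm ⟨x.1, hFsub x.2⟩) F.attach := by
        intro a _ b _ h
        have h2 := eE.symm.injective h
        have h3 : (a : Fin (t + 1)) = (b : Fin (t + 1)) := by
          simpa using congrArg Subtype.val h2
        exact Subtype.ext h3
      have hGcard : G.card = F.card := by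
        rw [hG, Finset.card_image_of_injOn hinj, Finset.card_attach]
      have hGne : G.Nonempty := by
        obtain ⟨x, hx⟩ := hFne
        exact ⟨_, Finset.mem_image.mpr ⟨⟨x, hx⟩, Finset.mem_attach _ _, rfl⟩⟩
      have hGu : G ≠ univ := by
        intro h
        have hc : G.card = t' + 1 := by rw [h]; simp
        have hFE : F.card < E.card := Finset.card_lt_card hFss
        omega
      have hsumG : ∑ j ∈ G, τ j = ∑ x ∈ F, σ x := by
        rw [hG, Finset.sum_image hinj,
          show ∑ x ∈ F.attach, τ (eE.symm ⟨x.1, hFsub x.2⟩) = ∑ x ∈ F.attach, σ x.1 from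
            Finset.sum_congr rfl (fun x _ => (hσE x.1 (hFsub x.2)).symm)]
        exact Finset.sum_attach F (fun x => σ x)
      have hg := hτgood G hGne hGu
      rw [hsumG, hGcard] at hg
      exact hg
  · -- left inverse
    intro σ hσ
    funext x
    by_cases hx : x ∈ E
    · simp only [dif_pos hx]
      exact congrArg σ (congrArg Subtype.val (eE.apply_symm_apply ⟨x, hx⟩))
    · simp only [dif_neg hx]
      exact congrArg σ (congrArg Subtype.val (eC.apply_symm_apply ⟨x, Finset.mem_compl.mpr hx⟩))
  · -- right inverse
    rintro ⟨n', τ, υ⟩ hp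
    rw [Finset.mem_sigma, Finset.mem_Icc, Finset.mem_product, goodSet, Finset.mem_filter,
      Finset.Nat.mem_antidiagonalTuple, Finset.Nat.mem_antidiagonalTuple] at hp
    dsimp only at hp
    obtain ⟨⟨hn1, hn2⟩, ⟨hτsum, hτgood⟩, hυsum⟩ := hp
    simp only
    set σ : Fin (t + 1) → ℕ := fun x =>
      if hx : x ∈ E then τ (eE.symm ⟨x, hx⟩)
      else υ (eC.symm ⟨x, Finset.mem_compl.mpr hx⟩) with hσdef
    have hσE : ∀ x (hx : x ∈ E), σ x = τ (eE.symm ⟨x, hx⟩) := by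
      intro x hx; simp only [hσdef, dif_pos hx]
    have hσC : ∀ x (hx : x ∉ E), σ x = υ (eC.symm ⟨x, Finset.mem_compl.mpr hx⟩) := by
      intro x hx; simp only [hσdef, dif_neg hx]
    have hsumE : ∑ x ∈ E, σ x = k - n' := by
      rw [← sumE, show ∑ j, σ (eE j) = ∑ j, τ j from Finset.sum_congr rfl (fun j _ => by
        rw [hσE _ (eE j).2]
        exact congrArg τ (eE.symm_apply_apply j))]
      exact hτsum
    have h1 : k - ∑ x ∈ E, σ x = n' := by rw [hsumE]; omega
    have hτeq : (fun j => σ (eE j)) = τ := funext fun j => by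
      rw [hσE _ (eE j).2]
      exact congrArg τ (eE.symm_apply_apply j)
    have hυeq : (fun j => σ (eC j)) = υ := funext fun j => by
      rw [hσC _ (Finset.mem_compl.mp (eC j).2)]
      exact congrArg υ (eC.symm_apply_apply j)
    exact Sigma.ext h1 (heq_of_eq (by rw [hτeq, hυeq]))


/-- card of `goodSet` at level 1. -/
lemma goodSet_one (r : ℕ → ℕ) (d k m : ℕ) : (goodSet r d k 1 m).card = 1 := by
  classical
  have h : goodSet r d k 1 m = Finset.Nat.antidiagonalTuple 1 m := by
    rw [goodSet]
    apply Finset.filter_true_of_mem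
    intro σ _ E hEne hEu
    exfalso
    apply hEu
    apply Finset.eq_univ_of_card
    have h1 : 1 ≤ E.card := Finset.card_pos.mpr hEne
    have h2 : E.card ≤ 1 := by
      simpa using Finset.card_le_univ E
    simp only [Fintype.card_fin]
    omega
  rw [h, Finset.Nat.antidiagonalTuple_one]
  simp

/-- The ℤ-form filter equals `goodSet`. -/
lemma filter_int_eq_goodSet (r : ℕ → ℕ) (d k : ℕ) (q n₀ : ℕ) (hn₀ : n₀ ≤ k)
    [DecidablePred (fun σ : Fin q → ℕ => ∀ E : Finset (Fin q), E.Nonempty → E ≠ Finset.univ →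
      (r (d - (E.card - 1)) : ℤ) - (n₀ : ℤ) + 1 ≤ ∑ i ∈ Eᶜ, (σ i : ℤ))] :
    ((Finset.Nat.antidiagonalTuple q (k - n₀)).filter
      (fun σ : Fin q → ℕ => ∀ E : Finset (Fin q), E.Nonempty → E ≠ Finset.univ →
        (r (d - (E.card - 1)) : ℤ) - (n₀ : ℤ) + 1 ≤ ∑ i ∈ Eᶜ, (σ i : ℤ)))
      = goodSet r d k q (k - n₀) := by
  classical
  rw [goodSet]
  apply Finset.filter_congr
  intro σ hσ
  rw [Finset.Nat.mem_antidiagonalTuple] at hσ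
  apply forall_congr'
  intro E
  apply imp_congr_right; intro _
  apply imp_congr_right; intro _
  have hsplit : ∑ i ∈ E, σ i + ∑ i ∈ Eᶜ, σ i = k - n₀ := by
    rw [Finset.sum_add_sum_compl]; exact hσ
  have hcast : ∑ i ∈ Eᶜ, (σ i : ℤ) = ((∑ i ∈ Eᶜ, σ i : ℕ) : ℤ) := by push_cast; rfl
  rw [hcast]
  omega


/-- The stratum cardinalities `B_{t,n} = #Σ₀^{q_{t,n}}(I_t, k-n)` (with `B_{0,n} = 1`)
satisfy the recursion
`B_{t,n} = C(k-n+t, t) - ∑_{t'=0}^{t-1} C(t+1, t'+1) ∑_{n'=n}^{r_{d-t'}}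
  C(n'-n+t-t'-1, t-t'-1) B_{t',n'}`. -/
theorem stmt15 (d : ℕ) (hd : 2 ≤ d) (r : ℕ → ℕ) (ρ k b : ℕ)
    (hr1 : 1 ≤ r 1)
    (hceil1 : 1 ≤ ⌈(3 * (r 1 : ℚ) - 1) / 2⌉)
    (hceil2 : ⌈(3 * (r 1 : ℚ) - 1) / 2⌉ ≤ (r 2 : ℤ))
    (hr2 : (r 2 : ℤ) ≤ 2 * (r 1 : ℤ) - 1)
    (hchain : ∀ s, 2 ≤ s → s + 1 ≤ d →
      2 ^ (d - s) * r s ≤ 2 ^ (d - s - 1) * r (s + 1))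
    (hk : 2 * r d + 1 ≤ k)
    (hρ : (ρ : ℤ) = (k : ℤ) - (b : ℤ))
    (hb1 : 2 * (r 1 : ℤ) - (r 2 : ℤ) ≤ (b : ℤ))
    (hb2 : (b : ℤ) ≤ (r 2 : ℤ) - (r 1 : ℤ) + 1)
    (B : ℕ → ℕ → ℕ)
    (hB0 : ∀ n, B 0 n = 1)
    (hBcard : ∀ t n, 1 ≤ t → t ≤ d - 1 → n ≤ r (d - t) →
      B t n = ((Finset.Nat.antidiagonalTuple (t + 1) (k - n)).filter
        (fun σ : Fin (t + 1) → ℕ =>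
          ∀ E : Finset (Fin (t + 1)), E.Nonempty → E ≠ Finset.univ →
            (r (d - (E.card - 1)) : ℤ) - (n : ℤ) + 1 ≤ ∑ i ∈ Eᶜ, (σ i : ℤ))).card) :
    ∀ t n, 1 ≤ t → t ≤ d - 1 → n ≤ r (d - t) →
      (B t n : ℤ) = ((k - n + t).choose t : ℤ) -
        ∑ t' ∈ Finset.range t, ((t + 1).choose (t' + 1) : ℤ) *
          ∑ n' ∈ Finset.Icc n (r (d - t')),
            ((n' - n + t - t' - 1).choose (t - t' - 1) : ℤ) * (B t' n' : ℤ) := by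
  classical
  -- arithmetic preliminaries
  have hr12 : r 1 ≤ r 2 := by
    have h1 : ((r 1 : ℚ)) ≤ (3 * (r 1 : ℚ) - 1) / 2 := by
      have h0 : (1 : ℚ) ≤ (r 1 : ℚ) := by exact_mod_cast hr1
      linarith
    have h2 : (r 1 : ℤ) ≤ ⌈(3 * (r 1 : ℚ) - 1) / 2⌉ := by
      calc (r 1 : ℤ) = ⌈((r 1 : ℤ) : ℚ)⌉ := by simp
        _ ≤ _ := Int.ceil_mono (by exact_mod_cast h1)
    exact_mod_cast h2.trans hceil2
  have hdouble : ∀ s, 2 ≤ s → s + 1 ≤ d → 2 * r s ≤ r (s + 1) := by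
    intro s h2 h3
    have hc := hchain s h2 h3
    have he : d - s = (d - s - 1) + 1 := by omega
    rw [he, pow_succ, mul_comm (2 ^ (d - s - 1)) 2, mul_assoc] at hc
    have heq : 2 * (2 ^ (d - s - 1) * r s) = 2 ^ (d - s - 1) * (2 * r s) := by ring
    rw [heq] at hc
    exact Nat.le_of_mul_le_mul_left hc (pow_pos (by norm_num) _)
  have hstep : ∀ s, 1 ≤ s → s + 1 ≤ d → r s ≤ r (s + 1) := by
    intro s h1 h2
    rcases Nat.lt_or_ge s 2 with h | h
    · have : s = 1 := by omega
      subst this; exact hr12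
    · have := hdouble s h h2; omega
  have hmono : ∀ a b, 1 ≤ a → a ≤ b → b ≤ d → r a ≤ r b := by
    have haux : ∀ j a, 1 ≤ a → a + j ≤ d → r a ≤ r (a + j) := by
      intro j
      induction j with
      | zero => intro a _ _; simp
      | succ j ih =>
        intro a h1 h2
        have h4 := ih a h1 (by omega)
        have h3 := hstep (a + j) (by omega) (by omega)
        have he : a + (j + 1) = (a + j) + 1 := by omega
        rw [he]
        omega
    intro a b h1 hab hbd
    have : b = a + (b - a) := by omega
    rw [this]
    exact haux (b - a) a h1 (by omega)
  have hrd1 : 1 ≤ r d := le_trans hr1 (hmono 1 d le_rfl (by omega) le_rfl)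
  have hk' : 2 * r d < k := by omega
  -- main induction-free computation
  intro t n ht1 ht2 hn
  have hq : t + 1 ≤ d := by omega
  have hrdt : r (d - t) ≤ r d := hmono (d - t) d (by omega) (by omega) le_rfl
  have hnk : n ≤ k := by omega
  have hRk : ∀ t', t' < t → r (d - t') < k := by
    intro t' ht'
    have : r (d - t') ≤ r d := hmono (d - t') d (by omega) (by omega) le_rfl
    omega
  set A := Finset.Nat.antidiagonalTuple (t + 1) (k - n) with hA
  set p : (Fin (t + 1) → ℕ) → Prop := fun σ =>
    ∀ E : Finset (Fin (t + 1)), E.Nonempty → E ≠ univ →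
      ∑ i ∈ E, σ i + r (d - (E.card - 1)) < k with hp
  have htotal : A.card = (k - n + t).choose t := by
    rw [hA, card_adt' (t + 1) (k - n) (by omega)]
    congr 1 <;> omega
  have hBgood : B t n = (goodSet r d k (t + 1) (k - n)).card := by
    rw [hBcard t n ht1 ht2 hn, filter_int_eq_goodSet r d k (t + 1) n hnk]
  have hsplit : (goodSet r d k (t + 1) (k - n)).card
      + (A.filter (fun σ => ¬ p σ)).card = A.card := by
    rw [goodSet]
    exact Finset.card_filter_add_card_filter_not (p := p)
  set S := (univ : Finset (Finset (Fin (t + 1)))).filter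
    (fun E => E.Nonempty ∧ E ≠ univ) with hSdef
  -- the bad set is the union of the strata
  have hbadU : A.filter (fun σ => ¬ p σ) = S.biUnion (strat r d k t n) := by
    ext σ
    simp only [Finset.mem_filter, Finset.mem_biUnion, hSdef, Finset.mem_univ, true_and]
    constructor
    · rintro ⟨hσA, hbad⟩
      simp only [hp] at hbad
      push_neg at hbad
      set V := (univ : Finset (Finset (Fin (t + 1)))).filter
        (fun E => E.Nonempty ∧ E ≠ univ ∧ k ≤ ∑ i ∈ E, σ i + r (d - (E.card - 1))) with hV
      have hVne : V.Nonempty := by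
        obtain ⟨E, hE1, hE2, hE3⟩ := hbad
        exact ⟨E, by simp [hV, hE1, hE2]; omega⟩
      obtain ⟨E, hEV, hEmin⟩ := Finset.exists_min_image V Finset.card hVne
      rw [hV, Finset.mem_filter] at hEV
      obtain ⟨-, hEne, hEu, hEviol⟩ := hEV
      refine ⟨E, ⟨hEne, hEu⟩, ?_⟩
      rw [strat, Finset.mem_filter]
      refine ⟨hσA, hEviol, ?_⟩
      intro F hFss hFne
      by_contra hc
      push_neg at hc
      have hFu : F ≠ univ := by
        intro h
        have h1 : F.card < E.card := Finset.card_lt_card hFss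
        have h2 : E.card ≤ t + 1 := by simpa using Finset.card_le_univ E
        rw [h] at h1
        simp only [Finset.card_univ, Fintype.card_fin] at h1
        omega
      have hFV : F ∈ V := by
        rw [hV, Finset.mem_filter]
        exact ⟨Finset.mem_univ _, hFne, hFu, hc⟩
      have := hEmin F hFV
      have := Finset.card_lt_card hFss
      omega
    · rintro ⟨E, ⟨hEne, hEu⟩, hst⟩
      rw [strat, Finset.mem_filter] at hst
      obtain ⟨hσA, hviol, -⟩ := hst
      refine ⟨hσA, ?_⟩
      simp only [hp]
      push_neg
      exact ⟨E, hEne, hEu, by omega⟩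
  have hdisjS : ∀ E₁ ∈ S, ∀ E₂ ∈ S, E₁ ≠ E₂ →
      Disjoint (strat r d k t n E₁) (strat r d k t n E₂) := by
    intro E₁ h₁ E₂ h₂ hne
    rw [hSdef, Finset.mem_filter] at h₁ h₂
    rw [Finset.disjoint_left]
    intro σ hs₁ hs₂
    rw [strat, Finset.mem_filter, Finset.Nat.mem_antidiagonalTuple] at hs₁ hs₂
    obtain ⟨hσA, hv₁, hm₁⟩ := hs₁
    obtain ⟨-, hv₂, hm₂⟩ := hs₂
    exact hne (minviol_unique hmono hdouble hk' hq σ (by omega)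
      E₁ E₂ h₁.2.1 h₁.2.2 hv₁ hm₁ h₂.2.1 h₂.2.2 hv₂ hm₂)
  have hbadcard : (A.filter (fun σ => ¬ p σ)).card
      = ∑ E ∈ S, (strat r d k t n E).card := by
    rw [hbadU]
    exact Finset.card_biUnion hdisjS
  -- regroup the sum over E by cardinality
  have hSgroup : S = (Finset.range t).biUnion
      (fun t' => Finset.powersetCard (t' + 1) (univ : Finset (Fin (t + 1)))) := by
    ext E
    simp only [hSdef, Finset.mem_filter, Finset.mem_univ, true_and, Finset.mem_biUnion,
      Finset.mem_range, Finset.mem_powersetCard]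
    constructor
    · rintro ⟨hne, hu⟩
      have h1 : 1 ≤ E.card := Finset.card_pos.mpr hne
      have h2 : E.card < t + 1 := by
        have := (Finset.card_lt_iff_ne_univ E).mpr hu
        simpa using this
      exact ⟨E.card - 1, by omega, Finset.subset_univ _, by omega⟩
    · rintro ⟨t', ht', -, hcard⟩
      constructor
      · exact Finset.card_pos.mp (by omega)
      · intro h
        rw [h] at hcard
        simp only [Finset.card_univ, Fintype.card_fin] at hcard
        omega
  have hsumgroup : ∑ E ∈ S, (strat r d k t n E).card
      = ∑ t' ∈ Finset.range t, ∑ E ∈ Finset.powersetCard (t' + 1)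
          (univ : Finset (Fin (t + 1))), (strat r d k t n E).card := by
    rw [hSgroup]
    apply Finset.sum_biUnion
    intro a ha b hb hab
    simp only [Function.onFun]
    rw [Finset.disjoint_left]
    intro E hEa hEb
    rw [Finset.mem_powersetCard] at hEa hEb
    exact hab (by omega)
  -- cardinality of each stratum
  have hstratcard : ∀ t' ∈ Finset.range t,
      ∀ E ∈ Finset.powersetCard (t' + 1) (univ : Finset (Fin (t + 1))),
      (strat r d k t n E).card
        = ∑ n' ∈ Finset.Icc n (r (d - t')),
            (B t' n') * (n' - n + t - t' - 1).choose (t - t' - 1) := by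
    intro t' ht' E hE
    rw [Finset.mem_range] at ht'
    rw [Finset.mem_powersetCard] at hE
    rw [strat_card r d k t n t' E hE.2 ht' hnk (hRk t' ht'), Finset.card_sigma]
    apply Finset.sum_congr rfl
    intro n' hn'
    rw [Finset.mem_Icc] at hn'
    have hn'k : n' ≤ k := by have := hRk t' ht'; omega
    rw [Finset.card_product]
    congr 1
    · -- goodSet card = B t' n'
      rcases Nat.eq_zero_or_pos t' with h0 | h0
      · subst h0
        rw [goodSet_one, hB0]
      · rw [hBcard t' n' h0 (by omega) hn'.2,
          filter_int_eq_goodSet r d k (t' + 1) n' hn'k]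
    · rw [card_adt' (t - t') (n' - n) (by omega)]
      congr 1
      omega
  have hsum2 : ∑ t' ∈ Finset.range t, ∑ E ∈ Finset.powersetCard (t' + 1)
          (univ : Finset (Fin (t + 1))), (strat r d k t n E).card
      = ∑ t' ∈ Finset.range t, (t + 1).choose (t' + 1) *
          ∑ n' ∈ Finset.Icc n (r (d - t')),
            (B t' n') * (n' - n + t - t' - 1).choose (t - t' - 1) := by
    apply Finset.sum_congr rfl
    intro t' ht'
    rw [Finset.sum_congr rfl (hstratcard t' ht'), Finset.sum_const, smul_eq_mul,
      Finset.card_powersetCard, Finset.card_univ, Fintype.card_fin]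
  -- put everything together
  have hbadfinal : (A.filter (fun σ => ¬ p σ)).card
      = ∑ t' ∈ Finset.range t, (t + 1).choose (t' + 1) *
          ∑ n' ∈ Finset.Icc n (r (d - t')),
            (B t' n') * (n' - n + t - t' - 1).choose (t - t' - 1) := by
    rw [hbadcard, hsumgroup, hsum2]
  have hfin : (B t n : ℤ)
      = ((k - n + t).choose t : ℤ)
        - ((A.filter (fun σ => ¬ p σ)).card : ℤ) := by
    rw [hBgood]
    have := hsplit
    rw [htotal] at this
    push_cast [← this]
    ring
  rw [hfin, hbadfinal]
  congr 1
  push_cast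
  apply Finset.sum_congr rfl
  intro t' _
  congr 1
  apply Finset.sum_congr rfl
  intro n' _
  push_cast
  ring
end

section
/- Under Assumption on (r, ρ, k, b), the following identity holds: C(k+d, d) − C(ρ+d, d) = Σ_{t=0}^{d−1} C(d, t+1) [ Σ_{n=0}^{r_{d−t}} C(n+d−t−1, d−t−1) B_{t,n} − Σ_{n=b}^{r_{d−t}} C(n−b+d−t−1, d−t−1) B_{t,n} ], where B_{t,n} are the stratum cardinalities defined by B_{0,n} = 1 and the recursion B_{t,n} = C(k−n+t, t) − Σ_{t'=0}^{t−1} C(t+1, t'+1) Σ_{n'=n}^{r_{d−t'}} C(n'−n+t−t'−1, t−t'−1) B_{t',n'}. -/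
open Finset

private lemma stmt16_hockey (c a : ℕ) : ∀ N : ℕ,
    (∑ i ∈ Finset.range N, (a + i + c).choose c) + (a + c).choose (c + 1)
      = (a + N + c).choose (c + 1) := by
  intro N
  induction N with
  | zero => simp
  | succ N ih =>
    rw [Finset.sum_range_succ]
    have h1 : a + (N + 1) + c = (a + N + c) + 1 := by omega
    rw [h1, Nat.choose_succ_succ]
    simp only [Nat.succ_eq_add_one] at *
    omega

private lemma stmt16_inner_sum (b c n' : ℕ) :
    (∑ n ∈ Finset.range b, if n ≤ n' then (n' - n + c).choose c else 0)
      + (if b ≤ n' then (n' - b + (c + 1)).choose (c + 1) else 0)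
      = (n' + (c + 1)).choose (c + 1) := by
  rcases le_or_gt b n' with h | h
  · rw [if_pos h]
    have h1 : ∑ n ∈ Finset.range b, (if n ≤ n' then (n' - n + c).choose c else 0)
        = ∑ n ∈ Finset.range b, (n' - b + 1 + (b - 1 - n) + c).choose c :=
      Finset.sum_congr rfl fun n hn => by
        rw [Finset.mem_range] at hn
        rw [if_pos (by omega)]
        congr 2
        omega
    rw [h1, Finset.sum_range_reflect (fun j => (n' - b + 1 + j + c).choose c) b]
    have h2 := stmt16_hockey c (n' - b + 1) b
    have e1 : n' - b + (c + 1) = n' - b + 1 + c := by omega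
    have e2 : n' - b + 1 + b + c = n' + (c + 1) := by omega
    rw [e1, ← e2]
    exact h2
  · rw [if_neg (by omega), add_zero]
    have h1 : ∑ n ∈ Finset.range b, (if n ≤ n' then (n' - n + c).choose c else 0)
        = ∑ n ∈ Finset.range (n' + 1), (n' - n + c).choose c := by
      rw [← Finset.sum_filter]
      apply Finset.sum_congr
      · ext x
        simp only [Finset.mem_filter, Finset.mem_range]
        omega
      · intros; rfl
    have h2 : ∑ n ∈ Finset.range (n' + 1), (n' - n + c).choose c
        = ∑ n ∈ Finset.range (n' + 1), (0 + n + c).choose c := by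
      rw [← Finset.sum_range_reflect (fun j => (0 + j + c).choose c) (n' + 1)]
      exact Finset.sum_congr rfl fun n hn => by
        rw [Finset.mem_range] at hn
        congr 2
        omega
    rw [h1, h2]
    have h3 := stmt16_hockey c 0 (n' + 1)
    have hz : (0 + c).choose (c + 1) = 0 := Nat.choose_eq_zero_of_lt (by omega)
    rw [hz, add_zero, show 0 + (n' + 1) + c = n' + (c + 1) from by omega] at h3
    exact h3

private lemma stmt16_swap_lemma (b R c : ℕ) (g : ℕ → ℤ) :
    (∑ n ∈ Finset.range b, ∑ n' ∈ Finset.Icc n R, ((n' - n + c).choose c : ℤ) * g n')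
      = (∑ n' ∈ Finset.Icc 0 R, ((n' + (c + 1)).choose (c + 1) : ℤ) * g n')
        - ∑ n' ∈ Finset.Icc b R, ((n' - b + (c + 1)).choose (c + 1) : ℤ) * g n' := by
  have hfil : ∀ m : ℕ, Finset.Icc m R = (Finset.Icc 0 R).filter (fun x => m ≤ x) := by
    intro m
    ext x
    simp only [Finset.mem_Icc, Finset.mem_filter]
    omega
  calc (∑ n ∈ Finset.range b, ∑ n' ∈ Finset.Icc n R, ((n' - n + c).choose c : ℤ) * g n')
      = ∑ n ∈ Finset.range b, ∑ n' ∈ Finset.Icc 0 R,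
          (if n ≤ n' then ((n' - n + c).choose c : ℤ) else 0) * g n' := by
        refine Finset.sum_congr rfl fun n _ => ?_
        rw [hfil n, Finset.sum_filter]
        exact Finset.sum_congr rfl fun n' _ => by split_ifs <;> simp
    _ = ∑ n' ∈ Finset.Icc 0 R, (∑ n ∈ Finset.range b,
          if n ≤ n' then ((n' - n + c).choose c : ℤ) else 0) * g n' := by
        rw [Finset.sum_comm]
        exact Finset.sum_congr rfl fun n' _ => (Finset.sum_mul _ _ _).symm
    _ = ∑ n' ∈ Finset.Icc 0 R,
          (((n' + (c + 1)).choose (c + 1) : ℤ)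
            - if b ≤ n' then ((n' - b + (c + 1)).choose (c + 1) : ℤ) else 0) * g n' := by
        refine Finset.sum_congr rfl fun n' _ => ?_
        congr 1
        have h := stmt16_inner_sum b c n'
        have h' : ((∑ n ∈ Finset.range b, if n ≤ n' then (n' - n + c).choose c else 0 : ℕ) : ℤ)
            + (((if b ≤ n' then (n' - b + (c + 1)).choose (c + 1) else 0 : ℕ)) : ℤ)
            = ((n' + (c + 1)).choose (c + 1) : ℤ) := by exact_mod_cast h
        push_cast at h'
        linarith
    _ = (∑ n' ∈ Finset.Icc 0 R, ((n' + (c + 1)).choose (c + 1) : ℤ) * g n')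
        - ∑ n' ∈ Finset.Icc 0 R,
            (if b ≤ n' then ((n' - b + (c + 1)).choose (c + 1) : ℤ) else 0) * g n' := by
        rw [← Finset.sum_sub_distrib]
        exact Finset.sum_congr rfl fun n' _ => by ring
    _ = _ := by
        congr 1
        rw [hfil b, Finset.sum_filter]
        exact Finset.sum_congr rfl fun n' _ => by split_ifs <;> simp

private lemma stmt16_per_t (d t' b R : ℕ) (ht : t' + 2 ≤ d) (g : ℕ → ℤ) :
    (∑ n ∈ Finset.range b, ∑ n' ∈ Finset.Icc n R,
        ((n' - n + (d - 1) - t' - 1).choose (d - 1 - t' - 1) : ℤ) * g n')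
      = (∑ n' ∈ Finset.Icc 0 R, ((n' + (d - t' - 1)).choose (d - t' - 1) : ℤ) * g n')
        - ∑ n' ∈ Finset.Icc b R, ((n' - b + (d - t' - 1)).choose (d - t' - 1) : ℤ) * g n' := by
  have h1 : d - 1 - t' - 1 = d - t' - 2 := by omega
  have h2 : d - t' - 1 = d - t' - 2 + 1 := by omega
  have h3 : ∀ n n' : ℕ, n' - n + (d - 1) - t' - 1 = n' - n + (d - t' - 2) := by
    intro n n'
    omega
  simp_rw [h3, h1, h2]
  exact stmt16_swap_lemma b R (d - t' - 2) g

private lemma stmt16_tele (d k : ℕ) (hd : 1 ≤ d) : ∀ b, b ≤ k →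
    ((k + d).choose d : ℤ)
      = ((k - b + d).choose d : ℤ)
        + ∑ n ∈ Finset.range b, ((k - n + (d - 1)).choose (d - 1) : ℤ) := by
  intro b
  induction b with
  | zero => simp
  | succ b ih =>
    intro hb
    rw [Finset.sum_range_succ, ih (by omega)]
    have h4 := Nat.choose_succ_succ (k - (b + 1) + d) (d - 1)
    simp only [Nat.succ_eq_add_one] at h4
    rw [Nat.sub_add_cancel hd] at h4
    rw [show k - (b + 1) + d + 1 = k - b + d from by omega,
        show k - (b + 1) + d = k - b + (d - 1) from by omega] at h4
    have h5 : ((k - b + d).choose d : ℤ)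
        = ((k - b + (d - 1)).choose (d - 1) : ℤ) + ((k - b + (d - 1)).choose d : ℤ) := by
      exact_mod_cast h4
    rw [show k - (b + 1) + d = k - b + (d - 1) from by omega]
    linarith

/-- Under Assumption 1.1, with `B_{t,n}` defined by `B_{0,n} = 1` and the recursion of
Lemma 7.3, the identity
`C(k+d,d) - C(ρ+d,d) = ∑_{t=0}^{d-1} C(d,t+1) [∑_{n=0}^{r_{d-t}} C(n+d-t-1,d-t-1) B_{t,n}
  - ∑_{n=b}^{r_{d-t}} C(n-b+d-t-1,d-t-1) B_{t,n}]` holds. -/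
theorem stmt16 (d : ℕ) (hd : 2 ≤ d) (r : ℕ → ℕ) (ρ k b : ℕ)
    (hr1 : 1 ≤ r 1)
    (hceil1 : 1 ≤ ⌈(3 * (r 1 : ℚ) - 1) / 2⌉)
    (hceil2 : ⌈(3 * (r 1 : ℚ) - 1) / 2⌉ ≤ (r 2 : ℤ))
    (hr2 : (r 2 : ℤ) ≤ 2 * (r 1 : ℤ) - 1)
    (hchain : ∀ s, 2 ≤ s → s + 1 ≤ d →
      2 ^ (d - s) * r s ≤ 2 ^ (d - s - 1) * r (s + 1))
    (hk : 2 * r d + 1 ≤ k)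
    (hρ : (ρ : ℤ) = (k : ℤ) - (b : ℤ))
    (hb1 : 2 * (r 1 : ℤ) - (r 2 : ℤ) ≤ (b : ℤ))
    (hb2 : (b : ℤ) ≤ (r 2 : ℤ) - (r 1 : ℤ) + 1)
    (B : ℕ → ℕ → ℤ)
    (hB0 : ∀ n, B 0 n = 1)
    (hBrec : ∀ t n, 1 ≤ t → t ≤ d - 1 → n ≤ r (d - t) →
      B t n = ((k - n + t).choose t : ℤ) -
        ∑ t' ∈ Finset.range t, ((t + 1).choose (t' + 1) : ℤ) *
          ∑ n' ∈ Finset.Icc n (r (d - t')),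
            ((n' - n + t - t' - 1).choose (t - t' - 1) : ℤ) * B t' n') :
    ((k + d).choose d : ℤ) - ((ρ + d).choose d : ℤ) =
      ∑ t ∈ Finset.range d, (d.choose (t + 1) : ℤ) *
        ((∑ n ∈ Finset.Icc 0 (r (d - t)),
            ((n + (d - t - 1)).choose (d - t - 1) : ℤ) * B t n) -
         (∑ n ∈ Finset.Icc b (r (d - t)),
            ((n - b + (d - t - 1)).choose (d - t - 1) : ℤ) * B t n)) := by
  have hbk : b ≤ k := by omega
  have hbr1 : b ≤ r 1 := by omega
  have hρn : ρ = k - b := by omega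
  subst hρn
  have hd1 : 1 ≤ d - 1 := by omega
  have lhs_eq : ((k + d).choose d : ℤ) - ((k - b + d).choose d : ℤ)
      = ∑ n ∈ Finset.range b, ((k - n + (d - 1)).choose (d - 1) : ℤ) := by
    have h := stmt16_tele d k (by omega) b hbk
    linarith
  rw [lhs_eq]
  have expand : ∀ n ∈ Finset.range b,
      ((k - n + (d - 1)).choose (d - 1) : ℤ)
        = B (d - 1) n
          + ∑ t' ∈ Finset.range (d - 1), ((d).choose (t' + 1) : ℤ) *
              ∑ n' ∈ Finset.Icc n (r (d - t')),
                ((n' - n + (d - 1) - t' - 1).choose (d - 1 - t' - 1) : ℤ) * B t' n' := by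
    intro n hn
    rw [Finset.mem_range] at hn
    have h := hBrec (d - 1) n hd1 le_rfl
      (by rw [show d - (d - 1) = 1 from by omega]; omega)
    rw [h, show d - 1 + 1 = d from by omega]
    ring
  rw [Finset.sum_congr rfl expand, Finset.sum_add_distrib]
  have hswap : (∑ n ∈ Finset.range b, ∑ t' ∈ Finset.range (d - 1),
        ((d.choose (t' + 1) : ℤ) * ∑ n' ∈ Finset.Icc n (r (d - t')),
          ((n' - n + (d - 1) - t' - 1).choose (d - 1 - t' - 1) : ℤ) * B t' n'))
      = ∑ t' ∈ Finset.range (d - 1), (d.choose (t' + 1) : ℤ) *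
          ((∑ n' ∈ Finset.Icc 0 (r (d - t')),
              ((n' + (d - t' - 1)).choose (d - t' - 1) : ℤ) * B t' n')
            - ∑ n' ∈ Finset.Icc b (r (d - t')),
              ((n' - b + (d - t' - 1)).choose (d - t' - 1) : ℤ) * B t' n') := by
    rw [Finset.sum_comm]
    refine Finset.sum_congr rfl fun t' ht' => ?_
    rw [← Finset.mul_sum]
    rw [Finset.mem_range] at ht'
    rw [stmt16_per_t d t' b (r (d - t')) (by omega) (B t')]
  rw [hswap]
  rw [show Finset.range d = Finset.range (d - 1 + 1) from by
    rw [Nat.sub_add_cancel (by omega : 1 ≤ d)], Finset.sum_range_succ]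
  have hlast : (d.choose (d - 1 + 1) : ℤ) *
      ((∑ n ∈ Finset.Icc 0 (r (d - (d - 1))),
          ((n + (d - (d - 1) - 1)).choose (d - (d - 1) - 1) : ℤ) * B (d - 1) n)
        - ∑ n ∈ Finset.Icc b (r (d - (d - 1))),
          ((n - b + (d - (d - 1) - 1)).choose (d - (d - 1) - 1) : ℤ) * B (d - 1) n)
      = ∑ n ∈ Finset.range b, B (d - 1) n := by
    rw [show d - 1 + 1 = d from by omega, Nat.choose_self,
        show d - (d - 1) = 1 from by omega]
    norm_num
    have hsum : ∑ n ∈ Finset.Icc 0 (r 1), B (d - 1) n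
        = (∑ n ∈ Finset.range b, B (d - 1) n) + ∑ n ∈ Finset.Icc b (r 1), B (d - 1) n := by
      rw [← Finset.Ico_add_one_right_eq_Icc 0 (r 1), ← Finset.Ico_add_one_right_eq_Icc b (r 1), Finset.range_eq_Ico]
      exact (Finset.sum_Ico_consecutive _ (Nat.zero_le b) (by omega)).symm
    linarith
  rw [hlast]
  ring
end
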